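/- arXiv:2107.01850 — 11 statements merged into one kernel-verified Lean document; each statement's English description precedes it below -/
import Mathlib

section
/- For any directed acyclic graph G on vertex set [p] equipped with a structural causal model and any target mean vector q ∈ ℝ^p, there exists a unique shift intervention I* (a set of perturbation targets together with deterministic shift values) such that the mean of the post-intervention distribution equals q. -/
open MeasureTheory

/-- For any causal structural model on a DAG `G` over `[p]`
(structural equations `Xᵢ = Fᵢ(X_{pa(i)}, ω)`, acyclicity expressed by
well-foundedness of the parent relation, `Fᵢ` depending only on the parents of `i`),
and any desired mean vector `q`, there exists a unique shift intervention
(encoded as a shift vector `a : Fin p → ℝ`, with `a i = 0` meaning `i` is not a target)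
such that the mean of the post-intervention distribution equals `q`. -/
theorem stmt_0 {p : ℕ} {Ω : Type*} [MeasurableSpace Ω] (μ : Measure Ω)
    [IsProbabilityMeasure μ]
    (par : Fin p → Fin p → Prop) (hacyc : WellFounded par)
    (F : Fin p → (Fin p → ℝ) → Ω → ℝ)
    (hdep : ∀ (i : Fin p) (x y : Fin p → ℝ) (ω : Ω),
      (∀ j, par j i → x j = y j) → F i x ω = F i y ω)
    (sol : (Fin p → ℝ) → Fin p → Ω → ℝ)
    (hsol : ∀ (a : Fin p → ℝ) (i : Fin p) (ω : Ω),
      sol a i ω = F i (fun j => sol a j ω) ω + a i)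
    (hint : ∀ (a : Fin p → ℝ) (i : Fin p), Integrable (sol a i) μ)
    (q : Fin p → ℝ) :
    ∃! a : Fin p → ℝ, ∀ i : Fin p, (∫ ω, sol a i ω ∂μ) = q i := by
  classical
  have htg : WellFounded (Relation.TransGen par) := hacyc.transGen
  -- `sol a i` depends only on `a` on the (reflexive-transitive) ancestors of `i`.
  have L : ∀ i : Fin p, ∀ a b : Fin p → ℝ,
      (∀ j, Relation.ReflTransGen par j i → a j = b j) → ∀ ω, sol a i ω = sol b i ω := by
    intro i
    induction i using hacyc.induction with
    | _ i IH =>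
      intro a b hab ω
      rw [hsol, hsol, hab i Relation.ReflTransGen.refl]
      congr 1
      apply hdep
      intro j hj
      exact IH j hj a b
        (fun k hk => hab k (hk.trans (Relation.ReflTransGen.single hj))) ω
  -- Define the shift vector by well-founded recursion on the transitive closure.
  set A : Fin p → ℝ := htg.fix (fun i rec =>
    q i - ∫ ω, sol (fun j => if h : Relation.TransGen par j i then rec j h else 0) i ω ∂μ)
    with hA
  set B : Fin p → Fin p → ℝ :=
    fun i j => if Relation.TransGen par j i then A j else 0 with hB
  have hAeq : ∀ i, A i = q i - ∫ ω, sol (B i) i ω ∂μ := by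
    intro i
    rw [hA, WellFounded.fix_eq]
    rfl
  have hBi : ∀ i, B i i = 0 := by
    intro i
    simp only [hB, if_neg (fun h => (htg.isIrrefl.irrefl i) h)]
  -- agreement of `A` and `B i` on ancestors of parents of `i`
  have hagree : ∀ (c : Fin p → ℝ) (i : Fin p),
      (∀ k, Relation.TransGen par k i → c k = A k) →
      ∀ ω, F i (fun j => sol c j ω) ω = F i (fun j => sol (B i) j ω) ω := by
    intro c i hc ω
    apply hdep
    intro j hj
    apply L j c (B i)
    intro k hk
    have hki : Relation.TransGen par k i := Relation.TransGen.tail' hk hj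
    rw [hc k hki, hB]
    simp [hki]
  have key : ∀ (c : Fin p → ℝ) (i : Fin p),
      (∀ k, Relation.TransGen par k i → c k = A k) →
      (∫ ω, sol c i ω ∂μ) = (∫ ω, sol (B i) i ω ∂μ) + c i := by
    intro c i hc
    have hpt : ∀ ω, sol c i ω = sol (B i) i ω + c i := by
      intro ω
      rw [hsol, hsol, hBi, add_zero, hagree c i hc ω]
    calc (∫ ω, sol c i ω ∂μ) = ∫ ω, (sol (B i) i ω + c i) ∂μ := by
            exact integral_congr_ae (Filter.Eventually.of_forall hpt)
      _ = (∫ ω, sol (B i) i ω ∂μ) + c i := by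
            rw [integral_add (hint (B i) i) (integrable_const _)]
            simp
  refine ⟨A, ?_, ?_⟩
  · intro i
    rw [key A i (fun k _ => rfl), hAeq i]
    ring
  · intro b hb
    funext i
    induction i using htg.induction with
    | _ i IH =>
      have h1 : (∫ ω, sol b i ω ∂μ) = (∫ ω, sol (B i) i ω ∂μ) + b i := key b i IH
      have h2 : (∫ ω, sol A i ω ∂μ) = (∫ ω, sol (B i) i ω ∂μ) + A i :=
        key A i (fun k _ => rfl)
      have h3 : (∫ ω, sol A i ω ∂μ) = q i := by
        rw [h2, hAeq i]; ring
      rw [hb i] at h1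
      rw [h3] at h2
      linarith
end

section
/- Every undirected connected graph whose edges are oriented acyclically without creating any v-structure has exactly one source node: if an acyclic orientation of a connected undirected graph C has two distinct nodes i, j with no incoming edges, then the orientation contains an induced subgraph a → b ← c with a and c non-adjacent. -/
lemma stmt_3_aux {V : Type*} (C : SimpleGraph V) (D : V → V → Prop)
    (horient : ∀ a b : V, C.Adj a b ↔ (D a b ∨ D b a))
    (j : V) (hj : ∀ a : V, ¬ D a j) :
    ∀ {x : V} (q : C.Walk x j) (w : V), D w x →
      (∀ r : C.Walk w j, q.length < r.length) →
      ∃ a b c : V, D a b ∧ D c b ∧ a ≠ c ∧ ¬ C.Adj a c := by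
  intro x q
  induction q with
  | nil => intro w hw _; exact absurd hw (hj w)
  | @cons x y _ h q' ih =>
    intro w hwx hmin
    by_cases hd : D y x
    · refine ⟨w, x, y, hwx, hd, ?_, ?_⟩
      · rintro rfl
        exact absurd (hmin q') (by simp)
      · intro hadj
        exact absurd (hmin (SimpleGraph.Walk.cons hadj q')) (by simp)
    · have hd' : D x y := ((horient x y).mp h).resolve_right hd
      refine ih hj x hd' ?_
      intro r
      have hadjwx : C.Adj w x := (horient w x).mpr (Or.inl hwx)
      have := hmin (SimpleGraph.Walk.cons hadjwx r)
      simpa using this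

/-- An acyclic, v-structure-free orientation of a connected undirected
graph has exactly one source: if an acyclic orientation `D` of a connected graph `C` has
two distinct nodes `i ≠ j` with no incoming edges, then the orientation contains a
v-structure, i.e. an induced subgraph `a → b ← c` with `a` and `c` non-adjacent. -/
theorem stmt_3 {V : Type*} (C : SimpleGraph V) (hconn : C.Connected)
    (D : V → V → Prop)
    (horient : ∀ a b : V, C.Adj a b ↔ (D a b ∨ D b a))
    (hanti : ∀ a b : V, ¬ (D a b ∧ D b a))
    (hacyc : ∀ a : V, ¬ Relation.TransGen D a a)
    (i j : V) (hij : i ≠ j)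
    (hi : ∀ a : V, ¬ D a i) (hj : ∀ a : V, ¬ D a j) :
    ∃ a b c : V, D a b ∧ D c b ∧ a ≠ c ∧ ¬ C.Adj a c := by
  obtain ⟨p, hp⟩ := hconn.exists_walk_length_eq_dist i j
  cases p with
  | nil => exact absurd rfl hij
  | @cons _ y _ h q =>
    have hiy : D i y := ((horient i y).mp h).resolve_right (hi y)
    refine stmt_3_aux C D horient j hj q i hiy ?_
    intro r
    have h1 : C.dist i j ≤ r.length := SimpleGraph.dist_le r
    have h2 : q.length + 1 = C.dist i j := by simpa using hp
    omega
end

section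
/- Let C be an undirected chordal graph and K a maximal clique of C. For any linear ordering π_K of the vertices of K, there exists a topological ordering π of all vertices of C that begins with π_K, such that orienting every edge of C from its earlier endpoint to its later endpoint in π creates no v-structures (equivalently, the reverse of π is a perfect elimination ordering of C). -/
open List

/-- A graph is chordal if every cycle of length at least 4 has a chord. -/
def IsChordal {V : Type*} (G : SimpleGraph V) : Prop :=
  ∀ (n : ℕ), 4 ≤ n → ∀ f : ZMod n → V, Function.Injective f →
    (∀ k : ZMod n, G.Adj (f k) (f (k + 1))) →
    ∃ k l : ZMod n, k ≠ l ∧ k + 1 ≠ l ∧ l + 1 ≠ k ∧ G.Adj (f k) (f l)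

section Aux

variable {V : Type*} {C : SimpleGraph V}

lemma chain'_getElem {l : List V} (h : l.IsChain C.Adj) {i : ℕ} (hi : i + 1 < l.length) :
    C.Adj l[i] l[i+1] := by
  rw [List.isChain_iff_getElem] at h
  simpa [List.get_eq_getElem] using h i (by omega)

lemma head?_some {l : List V} (h : l ≠ []) (h0 : 0 < l.length := List.length_pos_iff.mpr h) :
    l.head? = some l[0] := by
  rw [List.head?_eq_getElem?, List.getElem?_eq_getElem h0]

lemma getLast?_some {l : List V} (h : l ≠ []) :
    l.getLast? = some (l[l.length - 1]'(by have := List.length_pos_iff.mpr h; omega)) := by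
  rw [List.getLast?_eq_getElem?, List.getElem?_eq_getElem]

lemma drop_head? {l : List V} {k : ℕ} (hk : k < l.length) :
    (l.drop k).head? = some l[k] := by
  rw [List.head?_drop, List.getElem?_eq_getElem hk]

lemma drop_getLast? {l : List V} {k : ℕ} (hk : k < l.length) :
    (l.drop k).getLast? = l.getLast? := by
  have h1 : (l.drop k).length = l.length - k := List.length_drop
  have hne : l.drop k ≠ [] := by
    intro h; rw [← List.length_eq_zero_iff] at h; omega
  have hne' : l ≠ [] := by intro h; subst h; simp at hk
  rw [getLast?_some hne, getLast?_some hne']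
  congr 1
  rw [List.getElem_drop]
  congr 1
  omega

lemma take_head? {l : List V} {k : ℕ} (hk : 1 ≤ k) (hl : l ≠ []) :
    (l.take k).head? = l.head? := by
  have h0 : 0 < l.length := List.length_pos_iff.mpr hl
  have h1 : 0 < (l.take k).length := by rw [List.length_take]; omega
  rw [head?_some hl, head?_some (by intro h; rw [← List.length_eq_zero_iff] at h; omega) h1]
  congr 1
  exact List.getElem_take

lemma take_getLast? {l : List V} {k : ℕ} (hk : k < l.length) :
    (l.take (k+1)).getLast? = some l[k] := by
  have h1 : (l.take (k+1)).length = k + 1 := by rw [List.length_take]; omega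
  have hne : l.take (k+1) ≠ [] := by intro h; rw [← List.length_eq_zero_iff] at h; omega
  rw [List.getLast?_eq_getElem?, List.length_take, min_eq_left (by omega : k+1 ≤ l.length)]
  simp only [Nat.add_sub_cancel]
  rw [List.getElem?_take, if_pos (by omega : k < k + 1), List.getElem?_eq_getElem hk]

lemma mid_sublist (l : List V) {i j : ℕ} (hij : i ≤ j) :
    l.take i ++ l.drop j <+ l := by
  have : l.drop j = (l.drop i).drop (j - i) := by
    rw [List.drop_drop]
    congr 1
    omega
  rw [this]
  calc l.take i ++ (l.drop i).drop (j - i) <+ l.take i ++ l.drop i :=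
        List.Sublist.append_left (List.drop_sublist _ _) _
    _ = l := List.take_append_drop i l

/-- Cycle given as a nodup list of length ≥ 4 with cyclic adjacency yields a chord. -/
lemma chord_of_cycleList (hch : IsChordal C) (l : List V) (hn : 4 ≤ l.length)
    (hnd : l.Nodup)
    (hadj : ∀ i (h : i < l.length), C.Adj l[i] (l[(i+1) % l.length]'(Nat.mod_lt _ (by omega)))) :
    ∃ (i j : ℕ) (hi : i < l.length) (hj : j < l.length),
      i ≠ j ∧ (i+1) % l.length ≠ j ∧ (j+1) % l.length ≠ i ∧ C.Adj l[i] l[j] := by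
  set n := l.length with hnn
  haveI : NeZero n := ⟨by omega⟩
  haveI : Fact (1 < n) := ⟨by omega⟩
  set f : ZMod n → V := fun k => l[k.val]'(ZMod.val_lt k) with hf
  have hval : ∀ k : ZMod n, (k + 1).val = (k.val + 1) % n := by
    intro k
    rw [ZMod.val_add, ZMod.val_one]
  have hinj : Function.Injective f := by
    intro a b hab
    apply ZMod.val_injective n
    exact (hnd.getElem_inj_iff).mp hab
  have hstep : ∀ k : ZMod n, C.Adj (f k) (f (k+1)) := by
    intro k
    have h2 : f (k + 1) = l[(k.val + 1) % n]'(Nat.mod_lt _ (by omega)) := by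
      simp only [hf]
      congr 1
      exact hval k
    rw [h2]
    exact hadj k.val (ZMod.val_lt k)
  obtain ⟨k, m, hkm, hk1, hm1, hadjkm⟩ := hch n (by omega) f hinj hstep
  refine ⟨k.val, m.val, ZMod.val_lt k, ZMod.val_lt m, ?_, ?_, ?_, hadjkm⟩
  · intro h; exact hkm (ZMod.val_injective n h)
  · intro h; exact hk1 (ZMod.val_injective n (by rw [hval]; exact h))
  · intro h; exact hm1 (ZMod.val_injective n (by rw [hval]; exact h))

/-- Truncate a chain to end at a given element. -/
lemma chain_trunc {R : V → V → Prop} :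
    ∀ (l : List V), l.IsChain R → ∀ y ∈ l, ∃ l', l'.IsChain R ∧ l' ≠ [] ∧
      l'.head? = l.head? ∧ l'.getLast? = some y ∧ l' <+ l := by
  intro l
  induction l with
  | nil => intro _ y hy; simp at hy
  | cons x rest ih =>
    intro hc y hy
    by_cases hxy : y = x
    · subst hxy
      exact ⟨[y], by simp, by simp, by simp, by simp,
        (List.nil_sublist rest).cons₂ y⟩
    · have hy' : y ∈ rest := by
        rcases List.mem_cons.mp hy with h | h
        · exact absurd h hxy
        · exact h
      obtain ⟨l', h1, h2, h3, h4, h5⟩ := ih hc.tail y hy'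
      obtain ⟨z, l'', rfl⟩ := List.exists_cons_of_ne_nil h2
      refine ⟨x :: z :: l'', ?_, by simp, by simp, ?_, h5.cons₂ x⟩
      · rw [List.isChain_cons]
        refine ⟨?_, h1⟩
        intro w hw
        apply (List.isChain_cons.mp hc).1
        rw [← h3]
        exact hw
      · rw [List.getLast?_cons_cons]
        exact h4
end Aux

section Paths

variable {V : Type*} (C : SimpleGraph V)

/-- Step relation within a vertex set. -/
def Stp (t : Finset V) (x y : V) : Prop := C.Adj x y ∧ x ∈ t ∧ y ∈ t

variable {C}

lemma stp_symm {t : Finset V} : Symmetric (Stp C t) :=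
  fun _ _ h => ⟨h.1.symm, h.2.2, h.2.1⟩

lemma reachList {t : Finset V} {x y : V} (hx : x ∈ t)
    (h : Relation.ReflTransGen (Stp C t) x y) :
    ∃ l : List V, l.IsChain C.Adj ∧ l.Nodup ∧ l.head? = some x ∧ l.getLast? = some y ∧
      ∀ z ∈ l, z ∈ t := by
  induction h with
  | refl => exact ⟨[x], by simp, by simp, by simp, by simp, by simpa⟩
  | @tail b c hab hbc ih =>
    obtain ⟨l, h1, h2, h3, h4, h5⟩ := ih
    by_cases hcl : c ∈ l
    · obtain ⟨l', g1, g2, g3, g4, g5⟩ := chain_trunc l h1 c hcl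
      exact ⟨l', g1, List.Nodup.sublist g5 h2, by rw [g3]; exact h3, g4,
        fun z hz => h5 z (g5.subset hz)⟩
    · have hlne : l ≠ [] := by intro h; subst h; simp at h3
      refine ⟨l ++ [c], ?_, ?_, ?_, ?_, ?_⟩
      · rw [List.isChain_append]
        refine ⟨h1, by simp, ?_⟩
        intro p hp q hq
        simp at hq
        subst hq
        rw [h4] at hp
        simp at hp
        subst hp
        exact hbc.1
      · rw [List.nodup_append]
        exact ⟨h2, by simp, by intro a ha b hb hab; simp at hb; exact hcl (by rw [← hb, ← hab]; exact ha)⟩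
      · rw [List.head?_append, h3]; rfl
      · rw [List.getLast?_append]; simp
      · intro z hz
        rcases List.mem_append.mp hz with h | h
        · exact h5 z h
        · simp at h; subst h; exact hbc.2.2

end Paths

section Cyc

variable {V : Type*} {C : SimpleGraph V}

/-- Two internally-disjoint paths between u and v through non-adjacent vertex sets
force the edge u-v in a chordal graph. -/
lemma cyc (hch : IsChordal C) (A B : Finset V)
    (hABadj : ∀ x ∈ A, ∀ y ∈ B, ¬ C.Adj x y)
    (hABd : ∀ x ∈ A, x ∉ B)
    (u v : V) (huv : u ≠ v) (huA : u ∉ A) (huB : u ∉ B) (hvA : v ∉ A) (hvB : v ∉ B) :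
    ∀ (N : ℕ) (mA mB : List V), mA.length + mB.length = N →
      mA ≠ [] → mB ≠ [] → mA.Nodup → mB.Nodup →
      (∀ z ∈ mA, z ∈ A) → (∀ z ∈ mB, z ∈ B) →
      mA.IsChain C.Adj → mB.IsChain C.Adj →
      (∀ z ∈ mA.head?, C.Adj u z) → (∀ z ∈ mA.getLast?, C.Adj z v) →
      (∀ z ∈ mB.head?, C.Adj v z) → (∀ z ∈ mB.getLast?, C.Adj z u) →
      C.Adj u v := by
  intro N
  induction N using Nat.strong_induction_on with
  | _ N IH =>
  intro mA mB hsum hAne hBne hAnd hBnd hAmem hBmem hAch hBch hA1 hA2 hB1 hB2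
  set p := mA.length with hp'
  set q := mB.length with hq'
  have hp : 1 ≤ p := by
    have := List.length_pos_iff.mpr hAne; omega
  have hq : 1 ≤ q := by
    have := List.length_pos_iff.mpr hBne; omega
  set cl : List V := (u :: mA) ++ (v :: mB) with hc
  have hclen : cl.length = p + q + 2 := by simp [hc]; omega
  -- access lemmas
  have hc0 : ∀ (h : 0 < cl.length), cl[0] = u := by intro h; rfl
  have hcA : ∀ (i' : ℕ) (h2 : i' < p), ∀ (h : i' + 1 < cl.length), cl[i'+1] = mA[i'] := by
    intro i' h2 h
    have hl : i' + 1 < (u :: mA).length := by simp; omega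
    show ((u :: mA) ++ (v :: mB))[i'+1]'(by simp; omega) = mA[i']
    rw [List.getElem_append_left hl]
    exact List.getElem_cons_succ u mA i' hl
  have hcv : ∀ (h : p + 1 < cl.length), cl[p+1] = v := by
    intro h
    have hl : (u :: mA).length ≤ p + 1 := by simp; omega
    show ((u :: mA) ++ (v :: mB))[p+1]'(by simp; omega) = v
    rw [List.getElem_append_right hl]
    have e : p + 1 - (u :: mA).length = 0 := by simp; omega
    simp_rw [e]
    rfl
  have hcB : ∀ (k : ℕ) (hk : k < q), ∀ (h : p + 2 + k < cl.length), cl[p+2+k] = mB[k] := by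
    intro k hk h
    have hl : (u :: mA).length ≤ p + 2 + k := by simp; omega
    show ((u :: mA) ++ (v :: mB))[p+2+k]'(by simp; omega) = mB[k]
    rw [List.getElem_append_right hl]
    have e : p + 2 + k - (u :: mA).length = k + 1 := by simp; omega
    simp_rw [e]
    exact List.getElem_cons_succ v mB k (by simp; omega)
  -- endpoints adjacency in concrete form
  have hA1' : C.Adj u (mA[0]'(by omega)) := hA1 _ (head?_some hAne)
  have hA2' : C.Adj (mA[p-1]'(by omega)) v := hA2 _ (getLast?_some hAne)
  have hB1' : C.Adj v (mB[0]'(by omega)) := hB1 _ (head?_some hBne)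
  have hB2' : C.Adj (mB[q-1]'(by omega)) u := hB2 _ (getLast?_some hBne)
  -- the cycle is a chain
  have hchA : (u :: mA).IsChain C.Adj := List.isChain_cons.mpr ⟨hA1, hAch⟩
  have hchB : (v :: mB).IsChain C.Adj := List.isChain_cons.mpr ⟨hB1, hBch⟩
  have hlastA : (u :: mA).getLast? = mA.getLast? := by
    obtain ⟨a, t, rfl⟩ := List.exists_cons_of_ne_nil hAne
    exact List.getLast?_cons_cons
  have hchain : cl.IsChain C.Adj := by
    rw [show cl = (u :: mA) ++ (v :: mB) from hc, List.isChain_append]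
    refine ⟨hchA, hchB, ?_⟩
    intro x hx y hy
    rw [hlastA] at hx
    simp only [List.head?_cons, Option.mem_def, Option.some.injEq] at hy
    subst hy
    exact hA2 x hx
  -- the cycle is nodup
  have hAsubst : ∀ z ∈ mA, z ∈ A := hAmem
  have hnd : cl.Nodup := by
    rw [show cl = (u :: mA) ++ (v :: mB) from hc, List.nodup_append]
    refine ⟨?_, ?_, ?_⟩
    · rw [List.nodup_cons]
      exact ⟨fun h => huA (hAmem u h), hAnd⟩
    · rw [List.nodup_cons]
      exact ⟨fun h => hvB (hBmem v h), hBnd⟩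
    · intro z hz w hz' hzw
      subst hzw
      rcases List.mem_cons.mp hz with rfl | hz
      · rcases List.mem_cons.mp hz' with h | h
        · exact huv h
        · exact huB (hBmem z h)
      · rcases List.mem_cons.mp hz' with h | h
        · subst h; exact hvA (hAmem z hz)
        · exact hABd z (hAmem z hz) (hBmem z h)
  -- cyclic adjacency
  have hadj : ∀ i (h : i < cl.length),
      C.Adj cl[i] (cl[(i+1) % cl.length]'(Nat.mod_lt _ (by omega))) := by
    intro i h
    by_cases hi : i + 1 < cl.length
    · have e : (i+1) % cl.length = i + 1 := Nat.mod_eq_of_lt hi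
      simp_rw [e]
      exact chain'_getElem hchain hi
    · have hi' : i = cl.length - 1 := by omega
      have e : (i+1) % cl.length = 0 := by
        rw [hi']
        have : cl.length - 1 + 1 = cl.length := by omega
        rw [this, Nat.mod_self]
      simp_rw [e, hc0, hi']
      have elast : cl.length - 1 = p + 2 + (q - 1) := by omega
      simp_rw [elast, hcB (q-1) (by omega)]
      exact hB2'
  -- a chord exists
  obtain ⟨i, j, hi, hj, hij, hij1, hji1, hchord⟩ := chord_of_cycleList hch cl (by omega) hnd hadj
  -- main case analysis, assuming i < j
  have key : ∀ i j (hi : i < cl.length) (hj : j < cl.length), i < j →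
      (i+1) % cl.length ≠ j → (j+1) % cl.length ≠ i → C.Adj cl[i] cl[j] → C.Adj u v := by
    clear hij hij1 hji1 hchord hi hj
    intro i j hi hj hlt h1 h2 hchord
    have hcases : (i = 0 ∧ 1 ≤ j ∧ j ≤ p) ∨ (i = 0 ∧ j = p + 1) ∨ (i = 0 ∧ p + 2 ≤ j) ∨
        (1 ≤ i ∧ i ≤ p ∧ j ≤ p) ∨ (1 ≤ i ∧ i ≤ p ∧ j = p + 1) ∨
        (1 ≤ i ∧ i ≤ p ∧ p + 2 ≤ j) ∨ (i = p + 1 ∧ p + 2 ≤ j) ∨ (p + 2 ≤ i) := by omega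
    rcases hcases with ⟨rfl, hj1, hjp⟩ | ⟨rfl, rfl⟩ | ⟨rfl, hjB⟩ |
      ⟨hi1, hip, hjp⟩ | ⟨hi1, hip, rfl⟩ | ⟨hi1, hip, hjB⟩ | ⟨rfl, hjB⟩ | hiB
    -- case 1 : chord u -- mA[j-1]
    · have hj2 : 2 ≤ j := by
        rcases Nat.lt_or_ge j 2 with h | h
        · exfalso; apply h1
          rw [Nat.mod_eq_of_lt (by omega)]
          omega
        · exact h
      obtain ⟨j', rfl⟩ : ∃ j', j = j' + 1 := ⟨j - 1, by omega⟩
      rw [hc0, hcA j' (by omega)] at hchord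
      refine IH ((mA.drop j').length + q) ?_ (mA.drop j') mB rfl ?_ hBne
        (List.Nodup.sublist (List.drop_sublist _ _) hAnd) hBnd
        (fun z hz => hAmem z ((List.drop_sublist _ _).subset hz)) hBmem
        (hAch.suffix (List.drop_suffix _ _)) hBch ?_ ?_ hB1 hB2
      · rw [List.length_drop]; omega
      · intro h; rw [← List.length_eq_zero_iff, List.length_drop] at h; omega
      · intro z hz
        rw [drop_head? (by omega : j' < mA.length)] at hz
        simp only [Option.mem_def, Option.some.injEq] at hz
        subst hz; exact hchord
      · intro z hz
        rw [drop_getLast? (by omega : j' < mA.length)] at hz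
        exact hA2 z hz
    -- case 2 : the chord is u -- v
    · rwa [hc0, hcv] at hchord
    -- case 3 : chord u -- mB[j-p-2]
    · obtain ⟨k, rfl⟩ : ∃ k, j = p + 2 + k := ⟨j - p - 2, by omega⟩
      have hkq : k < q := by omega
      have hkq2 : k + 1 < q := by
        rcases Nat.lt_or_ge (k+1) q with h | h
        · exact h
        · exfalso; apply h2
          have : p + 2 + k + 1 = cl.length := by omega
          rw [this, Nat.mod_self]
      rw [hc0, hcB k hkq] at hchord
      refine IH (p + (mB.take (k+1)).length) ?_ mA (mB.take (k+1)) rfl hAne ?_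
        hAnd (List.Nodup.sublist (List.take_sublist _ _) hBnd)
        hAmem (fun z hz => hBmem z ((List.take_sublist _ _).subset hz))
        hAch (hBch.prefix (List.take_prefix _ _)) hA1 hA2 ?_ ?_
      · rw [List.length_take]; omega
      · intro h; rw [← List.length_eq_zero_iff, List.length_take] at h; omega
      · intro z hz
        rw [take_head? (by omega) hBne] at hz
        exact hB1 z hz
      · intro z hz
        rw [take_getLast? (by omega : k < mB.length)] at hz
        simp only [Option.mem_def, Option.some.injEq] at hz
        subst hz; exact hchord.symm
    -- case 4 : chord mA[i-1] -- mA[j-1]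
    · obtain ⟨i', rfl⟩ : ∃ i', i = i' + 1 := ⟨i - 1, by omega⟩
      obtain ⟨j', rfl⟩ : ∃ j', j = j' + 1 := ⟨j - 1, by omega⟩
      have hjj : i' + 2 ≤ j' := by
        rcases Nat.lt_or_ge (i'+1+1) (j'+1) with h | h
        · omega
        · have : j' + 1 = i' + 1 + 1 := by omega
          exfalso; apply h1
          rw [Nat.mod_eq_of_lt (by omega), this]
      rw [hcA i' (by omega), hcA j' (by omega)] at hchord
      set mA' := mA.take (i'+1) ++ mA.drop j' with hmA'
      have hlen' : mA'.length = (i' + 1) + (p - j') := by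
        rw [hmA', List.length_append, List.length_take, List.length_drop,
          min_eq_left (by omega)]
      refine IH (mA'.length + q) ?_ mA' mB rfl ?_ hBne
        (List.Nodup.sublist (mid_sublist mA (by omega)) hAnd) hBnd
        (fun z hz => hAmem z ((mid_sublist mA (by omega)).subset hz)) hBmem
        ?_ hBch ?_ ?_ hB1 hB2
      · omega
      · intro h; rw [← List.length_eq_zero_iff] at h; omega
      · rw [hmA', List.isChain_append]
        refine ⟨hAch.prefix (List.take_prefix _ _), hAch.suffix (List.drop_suffix _ _), ?_⟩
        intro x hx y hy
        rw [take_getLast? (by omega : i' < mA.length)] at hx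
        rw [drop_head? (by omega : j' < mA.length)] at hy
        simp only [Option.mem_def, Option.some.injEq] at hx hy
        subst hx; subst hy
        exact hchord
      · intro z hz
        rw [hmA', List.head?_append, take_head? (by omega) hAne, head?_some hAne] at hz
        exact hA1 z (by rw [head?_some hAne]; exact hz)
      · intro z hz
        rw [hmA', List.getLast?_append, drop_getLast? (by omega : j' < mA.length),
          getLast?_some hAne] at hz
        exact hA2 z (by rw [getLast?_some hAne]; exact hz)
    -- case 5 : chord mA[i-1] -- v
    · obtain ⟨i', rfl⟩ : ∃ i', i = i' + 1 := ⟨i - 1, by omega⟩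
      have hip' : i' + 1 < p := by
        rcases Nat.lt_or_ge (i'+1) p with h | h
        · exact h
        · exfalso; apply h1
          rw [Nat.mod_eq_of_lt (by omega)]
          omega
      rw [hcA i' (by omega), hcv] at hchord
      refine IH ((mA.take (i'+1)).length + q) ?_ (mA.take (i'+1)) mB rfl ?_ hBne
        (List.Nodup.sublist (List.take_sublist _ _) hAnd) hBnd
        (fun z hz => hAmem z ((List.take_sublist _ _).subset hz)) hBmem
        (hAch.prefix (List.take_prefix _ _)) hBch ?_ ?_ hB1 hB2
      · rw [List.length_take]; omega
      · intro h; rw [← List.length_eq_zero_iff, List.length_take] at h; omega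
      · intro z hz
        rw [take_head? (by omega) hAne] at hz
        exact hA1 z hz
      · intro z hz
        rw [take_getLast? (by omega : i' < mA.length)] at hz
        simp only [Option.mem_def, Option.some.injEq] at hz
        subst hz; exact hchord
    -- case 6 : chord mA -- mB : impossible
    · obtain ⟨i', rfl⟩ : ∃ i', i = i' + 1 := ⟨i - 1, by omega⟩
      obtain ⟨k, rfl⟩ : ∃ k, j = p + 2 + k := ⟨j - p - 2, by omega⟩
      rw [hcA i' (by omega), hcB k (by omega)] at hchord
      exact absurd hchord (hABadj _ (hAmem _ (List.getElem_mem _)) _ (hBmem _ (List.getElem_mem _)))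
    -- case 7 : chord v -- mB[j-p-2]
    · obtain ⟨k, rfl⟩ : ∃ k, j = p + 2 + k := ⟨j - p - 2, by omega⟩
      have hk1 : 1 ≤ k := by
        rcases Nat.lt_or_ge k 1 with h | h
        · exfalso; apply h1
          rw [Nat.mod_eq_of_lt (by omega)]
          omega
        · exact h
      rw [hcv, hcB k (by omega)] at hchord
      refine IH (p + (mB.drop k).length) ?_ mA (mB.drop k) rfl hAne ?_
        hAnd (List.Nodup.sublist (List.drop_sublist _ _) hBnd)
        hAmem (fun z hz => hBmem z ((List.drop_sublist _ _).subset hz))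
        hAch (hBch.suffix (List.drop_suffix _ _)) hA1 hA2 ?_ ?_
      · rw [List.length_drop]; omega
      · intro h; rw [← List.length_eq_zero_iff, List.length_drop] at h; omega
      · intro z hz
        rw [drop_head? (by omega : k < mB.length)] at hz
        simp only [Option.mem_def, Option.some.injEq] at hz
        subst hz; exact hchord
      · intro z hz
        rw [drop_getLast? (by omega : k < mB.length)] at hz
        exact hB2 z hz
    -- case 8 : chord mB[i-p-2] -- mB[j-p-2]
    · obtain ⟨a, rfl⟩ : ∃ a, i = p + 2 + a := ⟨i - p - 2, by omega⟩
      obtain ⟨b, rfl⟩ : ∃ b, j = p + 2 + b := ⟨j - p - 2, by omega⟩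
      have hab : a + 2 ≤ b := by
        rcases Nat.lt_or_ge (a+1) b with h | h
        · omega
        · have : b = a + 1 := by omega
          exfalso; apply h1
          rw [Nat.mod_eq_of_lt (by omega)]
          omega
      rw [hcB a (by omega), hcB b (by omega)] at hchord
      set mB' := mB.take (a+1) ++ mB.drop b with hmB'
      have hlen' : mB'.length = (a + 1) + (q - b) := by
        rw [hmB', List.length_append, List.length_take, List.length_drop,
          min_eq_left (by omega)]
      refine IH (p + mB'.length) ?_ mA mB' rfl hAne ?_
        hAnd (List.Nodup.sublist (mid_sublist mB (by omega)) hBnd)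
        hAmem (fun z hz => hBmem z ((mid_sublist mB (by omega)).subset hz))
        hAch ?_ hA1 hA2 ?_ ?_
      · omega
      · intro h; rw [← List.length_eq_zero_iff] at h; omega
      · rw [hmB', List.isChain_append]
        refine ⟨hBch.prefix (List.take_prefix _ _), hBch.suffix (List.drop_suffix _ _), ?_⟩
        intro x hx y hy
        rw [take_getLast? (by omega : a < mB.length)] at hx
        rw [drop_head? (by omega : b < mB.length)] at hy
        simp only [Option.mem_def, Option.some.injEq] at hx hy
        subst hx; subst hy
        exact hchord
      · intro z hz
        rw [hmB', List.head?_append, take_head? (by omega) hBne, head?_some hBne] at hz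
        exact hB1 z (by rw [head?_some hBne]; exact hz)
      · intro z hz
        rw [hmB', List.getLast?_append, drop_getLast? (by omega : b < mB.length),
          getLast?_some hBne] at hz
        exact hB2 z (by rw [getLast?_some hBne]; exact hz)
  rcases Nat.lt_trichotomy i j with hlt | heq | hgt
  · exact key i j hi hj hlt hij1 hji1 hchord
  · exact absurd heq hij
  · exact key j i hj hi hgt hji1 hij1 hchord.symm

end Cyc

section SimpOut

open scoped Classical

variable {V : Type*} {C : SimpleGraph V}

/-- Every finite "induced subgraph" of a chordal graph containing a non-clique vertex
has a simplicial vertex outside any prescribed clique. -/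
lemma simpOut (hch : IsChordal C) :
    ∀ (s : Finset V) (K0 : Finset V), K0 ⊆ s →
      (∀ x ∈ K0, ∀ y ∈ K0, x ≠ y → C.Adj x y) →
      (∃ w ∈ s, w ∉ K0) →
      ∃ v ∈ s, v ∉ K0 ∧ ∀ x ∈ s, ∀ y ∈ s, C.Adj v x → C.Adj v y → x ≠ y → C.Adj x y := by
  intro s
  induction s using Finset.strongInduction with
  | _ s IH =>
  intro K0 hK0s hK0cl hw
  by_cases hcomp : ∀ x ∈ s, ∀ y ∈ s, x ≠ y → C.Adj x y
  · obtain ⟨w, hws, hwK⟩ := hw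
    exact ⟨w, hws, hwK, fun x hx y hy _ _ hne => hcomp x hx y hy hne⟩
  push_neg at hcomp
  obtain ⟨a, has, b, hbs, hab, hnadj⟩ := hcomp
  -- separators exist
  have hsepD : ∀ T : Finset V, (∀ z ∈ s \ T, z = a ∨ z = b) →
      ¬ Relation.ReflTransGen (Stp C (s \ T)) a b := by
    intro T hT hreach
    have hall : ∀ x, Relation.ReflTransGen (Stp C (s \ T)) a x → x = a := by
      intro x hx
      induction hx with
      | refl => rfl
      | @tail y x h1 h2 ih =>
        subst ih
        rcases hT x h2.2.2 with h | h
        · exact h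
        · subst h
          exact absurd h2.1 hnadj
    exact hab (hall b hreach).symm
  set D : Finset V := (s.erase a).erase b with hD
  have hmemD : ∀ z, z ∈ D ↔ z ≠ b ∧ z ≠ a ∧ z ∈ s := by
    intro z
    simp [hD, Finset.mem_erase]
  have hDsep : ¬ Relation.ReflTransGen (Stp C (s \ D)) a b := by
    apply hsepD
    intro z hz
    rw [Finset.mem_sdiff] at hz
    obtain ⟨hzs, hzD⟩ := hz
    rw [hmemD] at hzD
    push_neg at hzD
    by_cases h1 : z = b
    · right; exact h1
    · by_cases h2 : z = a
      · left; exact h2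
      · exact absurd hzs (hzD h1 h2)
  -- minimal separator
  set seps : Finset (Finset V) :=
    D.powerset.filter (fun T => ¬ Relation.ReflTransGen (Stp C (s \ T)) a b) with hseps
  have hDmem : D ∈ seps := by
    rw [hseps, Finset.mem_filter, Finset.mem_powerset]
    exact ⟨le_refl D, hDsep⟩
  obtain ⟨S, hSmem, hSmin⟩ := Finset.exists_min_image seps Finset.card ⟨D, hDmem⟩
  rw [hseps, Finset.mem_filter, Finset.mem_powerset] at hSmem
  obtain ⟨hSsub, hSsep⟩ := hSmem
  set t : Finset V := s \ S with ht
  have htS : ∀ z ∈ t, z ∉ S := by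
    intro z hz
    rw [ht, Finset.mem_sdiff] at hz
    exact hz.2
  have hts : t ⊆ s := by rw [ht]; exact Finset.sdiff_subset
  have haS : a ∉ S := fun h => by
    have := (hmemD a).mp (hSsub h)
    exact this.2.1 rfl
  have hbS : b ∉ S := fun h => by
    have := (hmemD b).mp (hSsub h)
    exact this.1 rfl
  have hat : a ∈ t := by rw [ht, Finset.mem_sdiff]; exact ⟨has, haS⟩
  have hbt : b ∈ t := by rw [ht, Finset.mem_sdiff]; exact ⟨hbs, hbS⟩
  set A : Finset V := t.filter (fun x => Relation.ReflTransGen (Stp C t) a x) with hA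
  set B : Finset V := t.filter (fun x => Relation.ReflTransGen (Stp C t) b x) with hB
  have haA : a ∈ A := by rw [hA, Finset.mem_filter]; exact ⟨hat, Relation.ReflTransGen.refl⟩
  have hbB : b ∈ B := by rw [hB, Finset.mem_filter]; exact ⟨hbt, Relation.ReflTransGen.refl⟩
  have hAt : A ⊆ t := by rw [hA]; exact Finset.filter_subset _ _
  have hBt : B ⊆ t := by rw [hB]; exact Finset.filter_subset _ _
  have hAcl : ∀ x ∈ A, ∀ y, C.Adj x y → y ∈ t → y ∈ A := by
    intro x hx y hadj hyt
    have hxt : x ∈ t := hAt hx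
    rw [hA, Finset.mem_filter] at hx ⊢
    exact ⟨hyt, hx.2.tail ⟨hadj, hxt, hyt⟩⟩
  have hABdisj : ∀ x, x ∈ A → x ∈ B → False := by
    intro x hxA hxB
    rw [hA, Finset.mem_filter] at hxA
    rw [hB, Finset.mem_filter] at hxB
    exact hSsep (hxA.2.trans ((@Relation.ReflTransGen.symmetric _ _ ⟨fun _ _ h => stp_symm h⟩).symm _ _ hxB.2))
  have hABadj : ∀ x ∈ A, ∀ y ∈ B, ¬ C.Adj x y := by
    intro x hx y hy hadj
    exact hABdisj y (hAcl x hx y hadj (hBt hy)) hy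
  have hnbrA : ∀ u ∈ S, ∃ x ∈ A, C.Adj u x := by
    intro u huS
    by_contra hno
    push_neg at hno
    have herase : S.erase u ∉ seps := by
      intro hmem
      have h1 := hSmin _ hmem
      have h2 := Finset.card_erase_lt_of_mem huS
      omega
    have hreach : Relation.ReflTransGen (Stp C (s \ S.erase u)) a b := by
      by_contra hr
      exact herase (by
        rw [hseps, Finset.mem_filter, Finset.mem_powerset]
        exact ⟨(Finset.erase_subset u S).trans hSsub, hr⟩)
    have hinv : ∀ x, Relation.ReflTransGen (Stp C (s \ S.erase u)) a x → x ∈ A := by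
      intro x hx
      induction hx with
      | refl => exact haA
      | @tail y x h1 h2 ih =>
        by_cases hxu : x = u
        · subst hxu
          exact absurd h2.1.symm (hno y ih)
        · have hxt : x ∈ t := by
            have hx2 := h2.2.2
            rw [Finset.mem_sdiff] at hx2
            rw [ht, Finset.mem_sdiff]
            exact ⟨hx2.1, fun hxS => hx2.2 (Finset.mem_erase.mpr ⟨hxu, hxS⟩)⟩
          exact hAcl y ih x h2.1 hxt
    have hbA : b ∈ A := hinv b hreach
    rw [hA, Finset.mem_filter] at hbA
    exact hSsep hbA.2
  have hnbrB : ∀ u ∈ S, ∃ x ∈ B, C.Adj u x := by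
    intro u huS
    by_contra hno
    push_neg at hno
    have herase : S.erase u ∉ seps := by
      intro hmem
      have h1 := hSmin _ hmem
      have h2 := Finset.card_erase_lt_of_mem huS
      omega
    have hreach : Relation.ReflTransGen (Stp C (s \ S.erase u)) a b := by
      by_contra hr
      exact herase (by
        rw [hseps, Finset.mem_filter, Finset.mem_powerset]
        exact ⟨(Finset.erase_subset u S).trans hSsub, hr⟩)
    have hreach' : Relation.ReflTransGen (Stp C (s \ S.erase u)) b a :=
      (@Relation.ReflTransGen.symmetric _ _ ⟨fun _ _ h => stp_symm h⟩).symm _ _ hreach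
    have hinv : ∀ x, Relation.ReflTransGen (Stp C (s \ S.erase u)) b x → x ∈ B := by
      intro x hx
      induction hx with
      | refl => exact hbB
      | @tail y x h1 h2 ih =>
        by_cases hxu : x = u
        · subst hxu
          exact absurd h2.1.symm (hno y ih)
        · have hxt : x ∈ t := by
            have hx2 := h2.2.2
            rw [Finset.mem_sdiff] at hx2
            rw [ht, Finset.mem_sdiff]
            exact ⟨hx2.1, fun hxS => hx2.2 (Finset.mem_erase.mpr ⟨hxu, hxS⟩)⟩
          have hyB : y ∈ B := ih
          rw [hB, Finset.mem_filter] at hyB ⊢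
          exact ⟨hxt, hyB.2.tail ⟨h2.1, hyB.1, hxt⟩⟩
    have haB : a ∈ B := hinv a hreach'
    rw [hB, Finset.mem_filter] at haB
    exact hSsep ((@Relation.ReflTransGen.symmetric _ _ ⟨fun _ _ h => stp_symm h⟩).symm _ _ haB.2)
  -- the separator is a clique (key use of chordality)
  have hScl : ∀ u ∈ S, ∀ w ∈ S, u ≠ w → C.Adj u w := by
    intro u huS w hwS huw
    obtain ⟨xu, hxuA, hxuadj⟩ := hnbrA u huS
    obtain ⟨xw, hxwA, hxwadj⟩ := hnbrA w hwS
    obtain ⟨yu, hyuB, hyuadj⟩ := hnbrB u huS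
    obtain ⟨yw, hywB, hywadj⟩ := hnbrB w hwS
    have hAreach : ∀ x ∈ A, Relation.ReflTransGen (Stp C A) a x := by
      have key : ∀ x, Relation.ReflTransGen (Stp C t) a x → x ∈ A →
          Relation.ReflTransGen (Stp C A) a x := by
        intro x hr
        induction hr with
        | refl => intro _; exact Relation.ReflTransGen.refl
        | @tail y z h1 h2 ih =>
          intro hz
          have hyA : y ∈ A := by rw [hA, Finset.mem_filter]; exact ⟨h2.2.1, h1⟩
          exact (ih hyA).tail ⟨h2.1, hyA, hz⟩
      intro x hx
      have hx' := hx
      rw [hA, Finset.mem_filter] at hx'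
      exact key x hx'.2 hx
    have hBreach : ∀ x ∈ B, Relation.ReflTransGen (Stp C B) b x := by
      have key : ∀ x, Relation.ReflTransGen (Stp C t) b x → x ∈ B →
          Relation.ReflTransGen (Stp C B) b x := by
        intro x hr
        induction hr with
        | refl => intro _; exact Relation.ReflTransGen.refl
        | @tail y z h1 h2 ih =>
          intro hz
          have hyB : y ∈ B := by rw [hB, Finset.mem_filter]; exact ⟨h2.2.1, h1⟩
          exact (ih hyB).tail ⟨h2.1, hyB, hz⟩
      intro x hx
      have hx' := hx
      rw [hB, Finset.mem_filter] at hx'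
      exact key x hx'.2 hx
    have hxuxw : Relation.ReflTransGen (Stp C A) xu xw :=
      ((@Relation.ReflTransGen.symmetric _ _ ⟨fun _ _ h => stp_symm h⟩).symm _ _ (hAreach xu hxuA)).trans (hAreach xw hxwA)
    have hywyu : Relation.ReflTransGen (Stp C B) yw yu :=
      ((@Relation.ReflTransGen.symmetric _ _ ⟨fun _ _ h => stp_symm h⟩).symm _ _ (hBreach yw hywB)).trans (hBreach yu hyuB)
    obtain ⟨mA, g1, g2, g3, g4, g5⟩ := reachList hxuA hxuxw
    obtain ⟨mB, f1, f2, f3, f4, f5⟩ := reachList hywB hywyu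
    refine cyc hch A B hABadj (fun x hx hx' => hABdisj x hx hx') u w huw
        (fun h => htS u (hAt h) huS) (fun h => htS u (hBt h) huS)
        (fun h => htS w (hAt h) hwS) (fun h => htS w (hBt h) hwS)
        (mA.length + mB.length) mA mB rfl ?_ ?_ g2 f2 g5 f5 g1 f1 ?_ ?_ ?_ ?_
    · intro h; rw [h] at g3; simp at g3
    · intro h; rw [h] at f3; simp at f3
    · intro z hz
      rw [g3] at hz
      simp only [Option.mem_def, Option.some.injEq] at hz
      subst hz; exact hxuadj
    · intro z hz
      rw [g4] at hz
      simp only [Option.mem_def, Option.some.injEq] at hz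
      subst hz; exact hxwadj.symm
    · intro z hz
      rw [f3] at hz
      simp only [Option.mem_def, Option.some.injEq] at hz
      subst hz; exact hywadj
    · intro z hz
      rw [f4] at hz
      simp only [Option.mem_def, Option.some.injEq] at hz
      subst hz; exact hyuadj.symm
  -- recurse on both sides
  have hSs : S ⊆ s := fun z hz => ((hmemD z).mp (hSsub hz)).2.2
  have hbA : b ∉ A := fun h => hABdisj b h hbB
  have haB : a ∉ B := fun h => hABdisj a haA h
  have hsubA : A ∪ S ⊆ s := Finset.union_subset (hAt.trans hts) hSs
  have hsubB : B ∪ S ⊆ s := Finset.union_subset (hBt.trans hts) hSs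
  have hssA : A ∪ S ⊂ s := by
    rw [Finset.ssubset_iff_of_subset hsubA]
    exact ⟨b, hbs, fun h => (Finset.mem_union.mp h).elim hbA hbS⟩
  have hssB : B ∪ S ⊂ s := by
    rw [Finset.ssubset_iff_of_subset hsubB]
    exact ⟨a, has, fun h => (Finset.mem_union.mp h).elim haB haS⟩
  obtain ⟨vA, hvA1, hvAS, hvAsimp⟩ := IH (A ∪ S) hssA S Finset.subset_union_right hScl
    ⟨a, Finset.mem_union_left _ haA, haS⟩
  obtain ⟨vB, hvB1, hvBS, hvBsimp⟩ := IH (B ∪ S) hssB S Finset.subset_union_right hScl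
    ⟨b, Finset.mem_union_left _ hbB, hbS⟩
  have hvAA : vA ∈ A := (Finset.mem_union.mp hvA1).resolve_right hvAS
  have hvBB : vB ∈ B := (Finset.mem_union.mp hvB1).resolve_right hvBS
  have hsimpA : ∀ x ∈ s, ∀ y ∈ s, C.Adj vA x → C.Adj vA y → x ≠ y → C.Adj x y := by
    have hmemup : ∀ z ∈ s, C.Adj vA z → z ∈ A ∪ S := by
      intro z hz hadj
      by_cases hzS : z ∈ S
      · exact Finset.mem_union_right _ hzS
      · exact Finset.mem_union_left _
          (hAcl vA hvAA z hadj (by rw [ht, Finset.mem_sdiff]; exact ⟨hz, hzS⟩))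
    intro x hx y hy h1 h2 hne
    exact hvAsimp x (hmemup x hx h1) y (hmemup y hy h2) h1 h2 hne
  have hsimpB : ∀ x ∈ s, ∀ y ∈ s, C.Adj vB x → C.Adj vB y → x ≠ y → C.Adj x y := by
    have hBcl : ∀ x ∈ B, ∀ y, C.Adj x y → y ∈ t → y ∈ B := by
      intro x hx y hadj hyt
      have hxt : x ∈ t := hBt hx
      rw [hB, Finset.mem_filter] at hx ⊢
      exact ⟨hyt, hx.2.tail ⟨hadj, hxt, hyt⟩⟩
    have hmemup : ∀ z ∈ s, C.Adj vB z → z ∈ B ∪ S := by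
      intro z hz hadj
      by_cases hzS : z ∈ S
      · exact Finset.mem_union_right _ hzS
      · exact Finset.mem_union_left _
          (hBcl vB hvBB z hadj (by rw [ht, Finset.mem_sdiff]; exact ⟨hz, hzS⟩))
    intro x hx y hy h1 h2 hne
    exact hvBsimp x (hmemup x hx h1) y (hmemup y hy h2) h1 h2 hne
  by_cases hvAK : vA ∈ K0
  · refine ⟨vB, hts (hBt hvBB), ?_, hsimpB⟩
    intro hvBK
    have hne : vA ≠ vB := fun h => hABdisj vA hvAA (h ▸ hvBB)
    exact hABadj vA hvAA vB hvBB (hK0cl vA hvAK vB hvBK hne)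
  · exact ⟨vA, hts (hAt hvAA), hvAK, hsimpA⟩

end SimpOut

section Main

open scoped Classical

variable {V : Type*} {C : SimpleGraph V}

lemma ordLemma (hch : IsChordal C) (K : Set V) (hKcl : C.IsClique K)
    (πK : V → ℕ) (hπK : Set.InjOn πK K) :
    ∀ s : Finset V, (∀ x ∈ K, x ∈ s) →
    ∃ ρ : V → ℕ,
      (∀ x ∈ s, ∀ y ∈ s, ρ x = ρ y → x = y) ∧
      (∀ u ∈ K, ∀ v ∈ K, (ρ u < ρ v ↔ πK u < πK v)) ∧
      (∀ u ∈ K, ∀ v ∈ s, v ∉ K → ρ u < ρ v) ∧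
      (∀ b ∈ s, ∀ x ∈ s, ∀ y ∈ s, C.Adj x b → C.Adj y b →
        ρ x < ρ b → ρ y < ρ b → x ≠ y → C.Adj x y) := by
  have hKp := (SimpleGraph.isClique_iff C).mp hKcl
  intro s
  induction s using Finset.strongInduction with
  | _ s IH =>
  intro hKs
  by_cases hsK : ∀ x ∈ s, x ∈ K
  · -- the remaining vertices are exactly K : order by πK
    set ρ : V → ℕ := fun v => (s.filter (fun w => πK w < πK v)).card with hρ
    have hmono : ∀ u ∈ K, ∀ v ∈ K, πK u < πK v → ρ u < ρ v := by
      intro u hu v hv huv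
      apply Finset.card_lt_card
      rw [Finset.ssubset_iff_of_subset]
      · refine ⟨u, ?_, ?_⟩
        · rw [Finset.mem_filter]; exact ⟨hKs u hu, huv⟩
        · rw [Finset.mem_filter]; push_neg; intro _; omega
      · intro z hz
        rw [Finset.mem_filter] at hz ⊢
        exact ⟨hz.1, by omega⟩
    have heq : ∀ u ∈ K, ∀ v ∈ K, πK u = πK v → ρ u = ρ v := by
      intro u hu v hv huv
      simp only [hρ, huv]
    have hiff : ∀ u ∈ K, ∀ v ∈ K, (ρ u < ρ v ↔ πK u < πK v) := by
      intro u hu v hv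
      constructor
      · intro h
        rcases Nat.lt_trichotomy (πK u) (πK v) with h' | h' | h'
        · exact h'
        · exact absurd (heq u hu v hv h') (by omega)
        · exact absurd (hmono v hv u hu h') (by omega)
      · exact hmono u hu v hv
    refine ⟨ρ, ?_, hiff, ?_, ?_⟩
    · intro x hx y hy hxy
      rcases Nat.lt_trichotomy (πK x) (πK y) with h' | h' | h'
      · exact absurd (hmono x (hsK x hx) y (hsK y hy) h') (by omega)
      · exact hπK (hsK x hx) (hsK y hy) h'
      · exact absurd (hmono y (hsK y hy) x (hsK x hx) h') (by omega)
    · intro u _ v hv hvK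
      exact absurd (hsK v hv) hvK
    · intro b _ x hx y hy _ _ _ _ hne
      exact hKp (hsK x hx) (hsK y hy) hne
  · -- remove a simplicial vertex outside K
    push_neg at hsK
    obtain ⟨w, hws, hwK⟩ := hsK
    obtain ⟨v, hvs, hvK0, hvsimp⟩ := simpOut hch s (s.filter (fun x => x ∈ K))
      (Finset.filter_subset _ _)
      (fun x hx y hy hne => hKp (Finset.mem_filter.mp hx).2 (Finset.mem_filter.mp hy).2 hne)
      ⟨w, hws, by simp [hwK]⟩
    have hvK : v ∉ K := fun h => hvK0 (Finset.mem_filter.mpr ⟨hvs, h⟩)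
    have hss' : s.erase v ⊂ s := Finset.erase_ssubset hvs
    have hKs' : ∀ x ∈ K, x ∈ s.erase v :=
      fun x hx => Finset.mem_erase.mpr ⟨fun h => hvK (h ▸ hx), hKs x hx⟩
    obtain ⟨ρ', i1, i2, i3, i4⟩ := IH (s.erase v) hss' hKs'
    set M : ℕ := (s.erase v).sup ρ' + 1 with hM
    set ρ : V → ℕ := fun x => if x = v then M else ρ' x with hρ
    have hρv : ρ v = M := by simp [hρ]
    have hρ' : ∀ x ∈ s.erase v, ρ x = ρ' x := by
      intro x hx
      simp only [hρ]
      rw [if_neg (Finset.mem_erase.mp hx).1]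
    have hlt : ∀ x ∈ s.erase v, ρ x < M := by
      intro x hx
      rw [hρ' x hx, hM]
      have := Finset.le_sup (f := ρ') hx
      omega
    have hmem' : ∀ x ∈ s, x ≠ v → x ∈ s.erase v := fun x hx hne => Finset.mem_erase.mpr ⟨hne, hx⟩
    refine ⟨ρ, ?_, ?_, ?_, ?_⟩
    · intro x hx y hy hxy
      by_cases hxv : x = v
      · by_cases hyv : y = v
        · rw [hxv, hyv]
        · exfalso
          rw [hxv, hρv] at hxy
          have := hlt y (hmem' y hy hyv)
          omega
      · by_cases hyv : y = v
        · exfalso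
          rw [hyv, hρv] at hxy
          have := hlt x (hmem' x hx hxv)
          omega
        · exact i1 x (hmem' x hx hxv) y (hmem' y hy hyv)
            (by rw [← hρ' x (hmem' x hx hxv), ← hρ' y (hmem' y hy hyv)]; exact hxy)
    · intro u hu v' hv'
      rw [hρ' u (hKs' u hu), hρ' v' (hKs' v' hv')]
      exact i2 u hu v' hv'
    · intro u hu v' hv's hv'K
      by_cases hv'v : v' = v
      · rw [hv'v, hρv]
        exact hlt u (hKs' u hu)
      · rw [hρ' u (hKs' u hu), hρ' v' (hmem' v' hv's hv'v)]
        exact i3 u hu v' (hmem' v' hv's hv'v) hv'K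
    · intro b hb x hx y hy ax ay hxb hyb hne
      by_cases hbv : b = v
      · subst hbv
        exact hvsimp x hx y hy ax.symm ay.symm hne
      · have hbs' : b ∈ s.erase v := hmem' b hb hbv
        have hxv : x ≠ v := by
          intro h
          rw [h, hρv] at hxb
          have := hlt b hbs'
          omega
        have hyv : y ≠ v := by
          intro h
          rw [h, hρv] at hyb
          have := hlt b hbs'
          omega
        refine i4 b hbs' x (hmem' x hx hxv) y (hmem' y hy hyv) ax ay ?_ ?_ hne
        · rw [← hρ' x (hmem' x hx hxv), ← hρ' b hbs']; exact hxb
        · rw [← hρ' y (hmem' y hy hyv), ← hρ' b hbs']; exact hyb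

end Main

/-- Let `C` be a chordal graph and `K` a maximal clique of `C`.
For any linear ordering of the vertices of `K` (given by an injective ranking `πK`),
there is a topological ordering `ρ` of all vertices of `C` beginning with `K` in the
order prescribed by `πK`, such that orienting each edge from its earlier to its later
endpoint creates no v-structure: the earlier neighbors of every vertex form a clique
(equivalently, the reverse of `ρ` is a perfect elimination ordering). -/
theorem stmt_4 {V : Type*} [Fintype V] (C : SimpleGraph V) (hch : IsChordal C)
    (K : Set V) (hK : C.IsClique K)
    (hmax : ∀ K' : Set V, C.IsClique K' → K ⊆ K' → K' = K)
    (πK : V → ℕ) (hπK : Set.InjOn πK K) :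
    ∃ ρ : V → ℕ, Function.Injective ρ ∧
      (∀ u ∈ K, ∀ v ∈ K, ρ u < ρ v ↔ πK u < πK v) ∧
      (∀ u ∈ K, ∀ v ∉ K, ρ u < ρ v) ∧
      (∀ b : V, C.IsClique {a : V | C.Adj a b ∧ ρ a < ρ b}) := by
  classical
  obtain ⟨ρ, i1, i2, i3, i4⟩ := ordLemma hch K hK πK hπK Finset.univ
    (fun x _ => Finset.mem_univ x)
  refine ⟨ρ, ?_, i2, ?_, ?_⟩
  · intro x y h
    exact i1 x (Finset.mem_univ x) y (Finset.mem_univ y) h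
  · intro u hu v hv
    exact i3 u hu v (Finset.mem_univ v) hv
  · intro b
    rw [SimpleGraph.isClique_iff]
    intro x hx y hy hne
    exact i4 b (Finset.mem_univ b) x (Finset.mem_univ x) y (Finset.mem_univ y)
      hx.1 hy.1 hx.2 hy.2 hne
end

section
/- If an undirected chordal graph D has a maximal clique K with K ≠ V(D), then there exists a vertex v ∉ K whose neighborhood in D is a clique (i.e., v is a simplicial vertex outside K). -/
open SimpleGraph Relation

universe u

section Aux

variable {V : Type*} {G : SimpleGraph V}


namespace SimpleGraph.Walk

lemma getVert_mem_support' {u v : V} (p : G.Walk u v) {i : ℕ} (hi : i ≤ p.length) :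
    p.getVert i ∈ p.support := by
  induction p generalizing i with
  | nil => simp [Walk.getVert]
  | cons h q ih =>
    cases i with
    | zero => simp
    | succ i =>
      rw [Walk.getVert_cons_succ]
      simp only [Walk.support_cons, List.mem_cons]
      exact Or.inr (ih (by simpa [Walk.length_cons] using hi))

lemma IsPath.getVert_injOn' {u v : V} {p : G.Walk u v} (hp : p.IsPath) :
    ∀ i ≤ p.length, ∀ j ≤ p.length, p.getVert i = p.getVert j → i = j := by
  induction p with
  | nil => intro i hi j hj _; simp at hi hj; omega
  | cons h q ih =>
    intro i hi j hj hij
    have hp' : q.IsPath := hp.of_cons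
    have hu : _ ∉ q.support := (Walk.cons_isPath_iff _ _).mp hp |>.2
    cases i with
    | zero =>
      cases j with
      | zero => rfl
      | succ j =>
        rw [Walk.getVert_zero, Walk.getVert_cons_succ] at hij
        have hm := q.getVert_mem_support' (i := j) (by simpa using hj)
        rw [← hij] at hm
        exact absurd hm hu
    | succ i =>
      cases j with
      | zero =>
        rw [Walk.getVert_zero, Walk.getVert_cons_succ] at hij
        have hm := q.getVert_mem_support' (i := i) (by simpa using hi)
        rw [hij] at hm
        exact absurd hm hu
      | succ j =>
        rw [Walk.getVert_cons_succ, Walk.getVert_cons_succ] at hij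
        have := ih hp' i (by simpa using hi) j (by simpa using hj) hij
        omega

lemma length_drop' {u v : V} (p : G.Walk u v) (n : ℕ) : (p.drop n).length = p.length - n := by
  induction p generalizing n with
  | nil => cases n <;> simp [Walk.drop]
  | cons h q ih =>
    cases n with
    | zero => simp [Walk.drop]
    | succ n => simp [Walk.drop, ih]

/-- take the first `n` darts of a walk -/
def takeW {u v : V} : (p : G.Walk u v) → (n : ℕ) → G.Walk u (p.getVert n)
  | .nil, _ => .nil
  | .cons h q, 0 => Walk.nil.copy rfl (by rw [Walk.getVert_zero])
  | .cons h q, (n+1) => (Walk.cons h (takeW q n)).copy rfl (Walk.getVert_cons_succ q h).symm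

lemma length_takeW {u v : V} (p : G.Walk u v) (n : ℕ) :
    (p.takeW n).length = min n p.length := by
  induction p generalizing n with
  | nil => cases n <;> simp [takeW]
  | cons h q ih =>
    cases n with
    | zero => simp [takeW]
    | succ n => simp [takeW, ih]

end SimpleGraph.Walk

lemma shortest_no_chord {u v : V} (p : G.Walk u v) (hd : p.length = G.dist u v)
    {i j : ℕ} (hij : i + 2 ≤ j) (hj : j ≤ p.length)
    (hadj : G.Adj (p.getVert i) (p.getVert j)) : False := by
  set W : G.Walk u v := (p.takeW i).append (Walk.cons hadj (p.drop j)) with hW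
  have hlen : W.length = min i p.length + (1 + (p.length - j)) := by
    simp [hW, Walk.length_append, Walk.length_takeW, Walk.length_drop']
    omega
  have := G.dist_le W
  rw [hlen, ← hd] at this
  omega


/-- adjacency avoiding a set `S` -/
def auxRel (G : SimpleGraph V) (S : Set V) : V → V → Prop :=
  fun u v => G.Adj u v ∧ u ∉ S ∧ v ∉ S

lemma auxRel_symm {S : Set V} : Symmetric (auxRel G S) :=
  fun _ _ h => ⟨h.1.symm, h.2.2, h.2.1⟩

/-- the component of `a` outside `S` -/
def compOut (G : SimpleGraph V) (S : Set V) (a : V) : Set V :=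
  {v | ReflTransGen (auxRel G S) a v}

lemma compOut_self {S : Set V} (a : V) : a ∈ compOut G S a := ReflTransGen.refl

lemma compOut_closed {S : Set V} {a u w : V} (hu : u ∈ compOut G S a)
    (h : ReflTransGen (auxRel G S) u w) : w ∈ compOut G S a :=
  ReflTransGen.trans hu h

lemma compOut_comm {S : Set V} {a u : V} (hu : u ∈ compOut G S a) : a ∈ compOut G S u :=
  @Std.Symm.symm _ _ (@ReflTransGen.stdSymm _ _ ⟨fun _ _ h => auxRel_symm h⟩) _ _ hu

lemma compOut_subset {S : Set V} {a v : V} (ha : a ∉ S) (hv : v ∈ compOut G S a) : v ∉ S := by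
  induction hv with
  | refl => exact ha
  | tail _ step _ => exact step.2.2

lemma compOut_adj {S : Set V} {a u v : V} (hu : u ∈ compOut G S a) (ha : a ∉ S)
    (hadj : G.Adj u v) (hv : v ∉ S) : v ∈ compOut G S a :=
  ReflTransGen.tail hu ⟨hadj, compOut_subset ha hu, hv⟩

lemma reach_induce {S T : Set V} {a : V} (hsub : compOut G S a ⊆ T) {u w : V}
    (hu : u ∈ compOut G S a) (h : ReflTransGen (auxRel G S) u w) :
    (G.induce T).Reachable ⟨u, hsub hu⟩ ⟨w, hsub (compOut_closed hu h)⟩ := by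
  induction h with
  | refl => rfl
  | @tail b c hb step ih =>
    exact (ih).trans (SimpleGraph.Adj.reachable (by exact step.1))

lemma auxRel_def (G : SimpleGraph V) (S : Set V) (u v : V) :
    auxRel G S u v ↔ (G.Adj u v ∧ u ∉ S ∧ v ∉ S) := Iff.rfl

lemma no_cycle (hch : IsChordal G) {x y : V} (hxy : x ≠ y) (hnadj : ¬ G.Adj x y)
    {A B : Set V}
    (hdisj : ∀ v, v ∈ A → v ∈ B → False)
    (hxA : x ∉ A) (hyA : y ∉ A) (hxB : x ∉ B) (hyB : y ∉ B)
    (hAB : ∀ u ∈ A, ∀ v ∈ B, ¬ G.Adj u v)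
    (hrA : (G.induce (A ∪ {x, y})).Reachable ⟨x, by simp⟩ ⟨y, by simp⟩)
    (hrB : (G.induce (B ∪ {x, y})).Reachable ⟨y, by simp⟩ ⟨x, by simp⟩) : False := by
  obtain ⟨P, hPp, hPd⟩ := hrA.exists_path_of_dist
  obtain ⟨Q, hQp, hQd⟩ := hrB.exists_path_of_dist
  set p := P.length with hp
  set q := Q.length with hq
  set PV : ℕ → V := fun i => (P.getVert i : V) with hPV
  set QV : ℕ → V := fun i => (Q.getVert i : V) with hQV
  have hP0 : PV 0 = x := by simp [hPV]
  have hPlen : PV p = y := by simp [hPV, hp, SimpleGraph.Walk.getVert_length]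
  have hQ0 : QV 0 = y := by simp [hQV]
  have hQlen : QV q = x := by simp [hQV, hq, SimpleGraph.Walk.getVert_length]
  -- lengths at least 2
  have hp2 : 2 ≤ p := by
    by_contra h
    interval_cases hple : p
    · exact hxy (by simpa using congrArg Subtype.val (SimpleGraph.Walk.eq_of_length_eq_zero hple))
    · have := P.adj_getVert_succ (i := 0) (by omega)
      rw [SimpleGraph.Walk.getVert_zero] at this
      have h2 : G.Adj x (PV 1) := this
      rw [hPlen] at h2
      exact hnadj h2
  have hq2 : 2 ≤ q := by
    by_contra h
    interval_cases hqle : q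
    · exact hxy (by simpa using (congrArg Subtype.val (SimpleGraph.Walk.eq_of_length_eq_zero hqle)).symm)
    · have := Q.adj_getVert_succ (i := 0) (by omega)
      rw [SimpleGraph.Walk.getVert_zero] at this
      have h2 : G.Adj y (QV 1) := this
      rw [hQlen] at h2
      exact hnadj h2.symm
  -- adjacency along paths, in G
  have hPadj : ∀ i, i < p → G.Adj (PV i) (PV (i+1)) := fun i hi => P.adj_getVert_succ hi
  have hQadj : ∀ i, i < q → G.Adj (QV i) (QV (i+1)) := fun i hi => Q.adj_getVert_succ hi
  -- no chords
  have hPchord : ∀ i j, i + 2 ≤ j → j ≤ p → ¬ G.Adj (PV i) (PV j) := by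
    intro i j h1 h2 hadj
    exact shortest_no_chord P hPd h1 h2 hadj
  have hQchord : ∀ i j, i + 2 ≤ j → j ≤ q → ¬ G.Adj (QV i) (QV j) := by
    intro i j h1 h2 hadj
    exact shortest_no_chord Q hQd h1 h2 hadj
  -- membership facts
  have hPmem : ∀ i, PV i ∈ A ∪ {x, y} := fun i => (P.getVert i).2
  have hQmem : ∀ i, QV i ∈ B ∪ {x, y} := fun i => (Q.getVert i).2
  have hPint : ∀ i, 0 < i → i < p → PV i ∈ A := by
    intro i h0 hip
    rcases hPmem i with h | h | h
    · exact h
    · exfalso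
      have : P.getVert i = P.getVert 0 := Subtype.val_injective (by rw [show (P.getVert 0 : V) = x from hP0]; exact h)
      have := hPp.getVert_injOn' i (by omega) 0 (by omega) this
      omega
    · exfalso
      have : P.getVert i = P.getVert p := Subtype.val_injective (by rw [show (P.getVert p : V) = y from hPlen]; exact h)
      have := hPp.getVert_injOn' i (by omega) p (by omega) this
      omega
  have hQint : ∀ i, 0 < i → i < q → QV i ∈ B := by
    intro i h0 hiq
    rcases hQmem i with h | h | h
    · exact h
    · exfalso
      have : Q.getVert i = Q.getVert q := Subtype.val_injective (by rw [show (Q.getVert q : V) = x from hQlen]; exact h)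
      have := hQp.getVert_injOn' i (by omega) q (by omega) this
      omega
    · exfalso
      have : Q.getVert i = Q.getVert 0 := Subtype.val_injective (by rw [show (Q.getVert 0 : V) = y from hQ0]; exact h)
      have := hQp.getVert_injOn' i (by omega) 0 (by omega) this
      omega
  have hPnotB : ∀ i, i ≤ p → PV i ∉ B := by
    intro i hi hB
    rcases Nat.eq_or_lt_of_le (Nat.zero_le i) with h0 | h0
    · rw [← h0, hP0] at hB; exact hxB hB
    rcases Nat.eq_or_lt_of_le hi with hp' | hp'
    · rw [hp', hPlen] at hB; exact hyB hB
    · exact hdisj _ (hPint i h0 hp') hB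
  -- the cycle
  set n := p + q with hn
  have hn4 : 4 ≤ n := by omega
  haveI : NeZero n := ⟨by omega⟩
  haveI : Fact (1 < n) := ⟨by omega⟩
  set g : ℕ → V := fun i => if i ≤ p then PV i else QV (i - p) with hg
  have hgle : ∀ i, i ≤ p → g i = PV i := fun i h => if_pos h
  have hggt : ∀ i, p < i → g i = QV (i - p) := fun i h => if_neg (by omega)
  have hgge : ∀ i, p ≤ i → g i = QV (i - p) := by
    intro i h
    rcases Nat.eq_or_lt_of_le h with h' | h'
    · rw [← h', hgle p le_rfl, hPlen, Nat.sub_self, hQ0]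
    · exact hggt i h'
  set f : ZMod n → V := fun k => g k.val with hf
  have hval1 : ∀ k : ZMod n, (k + 1).val = (k.val + 1) % n := by
    intro k; rw [ZMod.val_add, ZMod.val_one]
  -- cycle adjacency
  have hgadj : ∀ i, i < n → G.Adj (g i) (g ((i+1) % n)) := by
    intro i hi
    by_cases h1 : i < p
    · rw [Nat.mod_eq_of_lt (by omega), hgle i (by omega), hgle (i+1) (by omega)]
      exact hPadj i h1
    · by_cases h3 : i + 1 < n
      · rw [Nat.mod_eq_of_lt h3, hgge i (by omega), hgge (i+1) (by omega),
          show i + 1 - p = (i - p) + 1 by omega]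
        exact hQadj (i - p) (by omega)
      · have h0 : (i + 1) % n = 0 := by
          rw [show i + 1 = n by omega]; exact Nat.mod_self n
        rw [h0, hgle 0 (by omega), hP0, hgge i (by omega), show i - p = q - 1 by omega,
          ← hQlen]
        have := hQadj (q-1) (by omega)
        rw [show q - 1 + 1 = q by omega] at this
        exact this
  -- injectivity of the cycle map
  have hginj : ∀ i, i < n → ∀ j, j < n → g i = g j → i = j := by
    intro i hi j hj hgij
    by_cases hip : i ≤ p <;> by_cases hjp : j ≤ p
    · rw [hgle i hip, hgle j hjp] at hgij
      exact hPp.getVert_injOn' i hip j hjp (Subtype.val_injective hgij)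
    · exfalso
      rw [hgle i hip, hggt j (by omega)] at hgij
      have hB : QV (j - p) ∈ B := hQint (j - p) (by omega) (by omega)
      rw [← hgij] at hB
      exact hPnotB i hip hB
    · exfalso
      rw [hgle j hjp, hggt i (by omega)] at hgij
      have hB : QV (i - p) ∈ B := hQint (i - p) (by omega) (by omega)
      rw [hgij] at hB
      exact hPnotB j hjp hB
    · rw [hggt i (by omega), hggt j (by omega)] at hgij
      have := hQp.getVert_injOn' (i-p) (by omega) (j-p) (by omega) (Subtype.val_injective hgij)
      omega
  -- no chords in the cycle
  have hno : ∀ i j, i < n → j < n → i + 2 ≤ j → ¬(i = 0 ∧ j = n - 1) → ¬ G.Adj (g i) (g j) := by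
    intro i j hi hj hij hex hadj
    by_cases hjp : j ≤ p
    · rw [hgle i (by omega), hgle j hjp] at hadj
      exact hPchord i j hij hjp hadj
    · by_cases hip : p ≤ i
      · rw [hgge i hip, hgge j (by omega)] at hadj
        exact hQchord (i-p) (j-p) (by omega) (by omega) hadj
      · rw [hggt j (by omega)] at hadj
        have hjB : QV (j - p) ∈ B := hQint (j - p) (by omega) (by omega)
        by_cases hi0 : 0 < i
        · rw [hgle i (by omega)] at hadj
          have hiA : PV i ∈ A := hPint i hi0 (by omega)
          exact hAB _ hiA _ hjB hadj
        · have hieq : i = 0 := by omega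
          rw [hieq, hgle 0 (by omega), hP0, ← hQlen] at hadj
          have hjq : j - p + 2 ≤ q := by
            rcases Nat.lt_or_ge (j - p) (q - 1) with h | h
            · omega
            · exfalso; exact hex ⟨hieq, by omega⟩
          exact hQchord (j-p) q hjq le_rfl hadj.symm
  -- apply chordality
  have finj : Function.Injective f := by
    intro k l hkl
    exact ZMod.val_injective n (hginj k.val (ZMod.val_lt k) l.val (ZMod.val_lt l) hkl)
  have fadj : ∀ k : ZMod n, G.Adj (f k) (f (k + 1)) := by
    intro k
    have : f (k + 1) = g ((k.val + 1) % n) := by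
      show g ((k+1).val) = _
      rw [hval1 k]
    rw [this]
    exact hgadj k.val (ZMod.val_lt k)
  obtain ⟨k, l, h1, h2, h3, h4⟩ := hch n hn4 f finj fadj
  have hne : k.val ≠ l.val := fun h => h1 (ZMod.val_injective n h)
  have h2' : (k.val + 1) % n ≠ l.val := by
    intro h
    exact h2 (ZMod.val_injective n (by rw [hval1]; exact h))
  have h3' : (l.val + 1) % n ≠ k.val := by
    intro h
    exact h3 (ZMod.val_injective n (by rw [hval1]; exact h))
  have hkn := ZMod.val_lt k
  have hln := ZMod.val_lt l
  rcases Nat.lt_or_ge k.val l.val with hlt | hge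
  · have hstep : k.val + 1 < n := by omega
    have hij : k.val + 2 ≤ l.val := by
      have := h2'
      rw [Nat.mod_eq_of_lt hstep] at this
      omega
    have hex : ¬(k.val = 0 ∧ l.val = n - 1) := by
      rintro ⟨hk0, hl1⟩
      apply h3'
      rw [hl1, Nat.sub_add_cancel (by omega), Nat.mod_self, hk0]
    exact hno k.val l.val hkn hln hij hex h4
  · have hlt : l.val < k.val := by omega
    have hstep : l.val + 1 < n := by omega
    have hij : l.val + 2 ≤ k.val := by
      have := h3'
      rw [Nat.mod_eq_of_lt hstep] at this
      omega
    have hex : ¬(l.val = 0 ∧ k.val = n - 1) := by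
      rintro ⟨hl0, hk1⟩
      apply h2'
      rw [hk1, Nat.sub_add_cancel (by omega), Nat.mod_self, hl0]
    exact hno l.val k.val hln hkn hij hex h4.symm

lemma induce_chordal (hch : IsChordal G) (T : Set V) : IsChordal (G.induce T) := by
  intro n hn f hinj hadj
  obtain ⟨k, l, h1, h2, h3, h4⟩ :=
    hch n hn (fun k => (f k : V)) (fun a b h => hinj (Subtype.val_injective h)) (fun k => hadj k)
  exact ⟨k, l, h1, h2, h3, h4⟩

/-- key lemma: a minimal separator is a clique -/
lemma sep_clique (hch : IsChordal G) {a b : V} {S : Set V}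
    (ha : a ∉ S) (hb : b ∉ S)
    (hsep : ¬ ReflTransGen (auxRel G S) a b)
    (hmin : ∀ x ∈ S, ReflTransGen (auxRel G (S \ {x})) a b)
    {x y : V} (hx : x ∈ S) (hy : y ∈ S) (hxy : x ≠ y) : G.Adj x y := by
  by_contra hnadj
  set A := compOut G S a with hA
  set B := compOut G S b with hB
  have hdisj : ∀ v, v ∈ A → v ∈ B → False := by
    intro v hvA hvB
    exact hsep (ReflTransGen.trans hvA (compOut_comm hvB))
  have hAS : ∀ v ∈ A, v ∉ S := fun v hv => compOut_subset ha hv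
  have hBS : ∀ v ∈ B, v ∉ S := fun v hv => compOut_subset hb hv
  have hAB : ∀ u ∈ A, ∀ v ∈ B, ¬ G.Adj u v := by
    intro u hu v hv hadj
    exact hdisj v (compOut_adj hu ha hadj (hBS v hv)) hv
  -- every z ∈ S has a neighbor in A and in B
  have nbrA : ∀ z ∈ S, ∃ w ∈ A, G.Adj z w := by
    intro z hz
    have hchain := hmin z hz
    have hbA : b ∉ A := fun h => hsep h
    clear hmin
    -- prove: any v reachable avoiding S \ {z}, if v ∉ A then z has a neighbor in A
    have key : ∀ v, ReflTransGen (auxRel G (S \ {z})) a v → v ∉ A → ∃ w ∈ A, G.Adj z w := by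
      intro v hv
      induction hv with
      | refl => intro h; exact absurd (compOut_self a) h
      | @tail c d hc step ih =>
        intro hd
        by_cases hcA : c ∈ A
        · rw [auxRel_def] at step
          obtain ⟨hadj, hc1, hd1⟩ := step
          by_cases hdS : d ∈ S
          · have : d = z := by
              by_contra hne
              exact hd1 ⟨hdS, hne⟩
            exact ⟨c, hcA, this ▸ hadj.symm⟩
          · exact absurd (compOut_adj hcA ha hadj hdS) hd
        · exact ih hcA
    exact key b hchain hbA
  have nbrB : ∀ z ∈ S, ∃ w ∈ B, G.Adj z w := by
    intro z hz
    have hchain := (@Std.Symm.symm _ _ (@ReflTransGen.stdSymm _ _ ⟨fun u v h => by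
      rw [auxRel_def] at h ⊢; exact ⟨h.1.symm, h.2.2, h.2.1⟩⟩) _ _) (hmin z hz)
    have haB : a ∉ B := fun h => hsep (compOut_comm h)
    have key : ∀ v, ReflTransGen (auxRel G (S \ {z})) b v → v ∉ B → ∃ w ∈ B, G.Adj z w := by
      intro v hv
      induction hv with
      | refl => intro h; exact absurd (compOut_self b) h
      | @tail c d hc step ih =>
        intro hd
        by_cases hcB : c ∈ B
        · rw [auxRel_def] at step
          obtain ⟨hadj, hc1, hd1⟩ := step
          by_cases hdS : d ∈ S
          · have : d = z := by
              by_contra hne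
              exact hd1 ⟨hdS, hne⟩
            exact ⟨c, hcB, this ▸ hadj.symm⟩
          · exact absurd (compOut_adj hcB hb hadj hdS) hd
        · exact ih hcB
    exact key a hchain haB
  -- reachability x to y through A
  obtain ⟨wx, hwxA, hwxadj⟩ := nbrA x hx
  obtain ⟨wy, hwyA, hwyadj⟩ := nbrA y hy
  obtain ⟨wx', hwxB, hwxadj'⟩ := nbrB x hx
  obtain ⟨wy', hwyB, hwyadj'⟩ := nbrB y hy
  have hsubA : A ⊆ A ∪ {x, y} := Set.subset_union_left
  have hsubB : B ⊆ B ∪ {x, y} := Set.subset_union_left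
  have hrA : (G.induce (A ∪ {x, y})).Reachable ⟨x, by simp⟩ ⟨y, by simp⟩ := by
    have hchain : ReflTransGen (auxRel G S) wx wy :=
      ReflTransGen.trans (compOut_comm hwxA) hwyA
    have hmid := reach_induce hsubA hwxA hchain
    have e1 : (G.induce (A ∪ {x, y})).Adj ⟨x, by simp⟩ ⟨wx, hsubA hwxA⟩ := hwxadj
    have e2 : (G.induce (A ∪ {x, y})).Adj ⟨wy, hsubA (compOut_closed hwxA hchain)⟩ ⟨y, by simp⟩ := hwyadj.symm
    exact (e1.reachable).trans (hmid.trans e2.reachable)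
  have hrB : (G.induce (B ∪ {x, y})).Reachable ⟨y, by simp⟩ ⟨x, by simp⟩ := by
    have hchain : ReflTransGen (auxRel G S) wy' wx' :=
      ReflTransGen.trans (compOut_comm hwyB) hwxB
    have hmid := reach_induce hsubB hwyB hchain
    have e1 : (G.induce (B ∪ {x, y})).Adj ⟨y, by simp⟩ ⟨wy', hsubB hwyB⟩ := hwyadj'
    have e2 : (G.induce (B ∪ {x, y})).Adj ⟨wx', hsubB (compOut_closed hwyB hchain)⟩ ⟨x, by simp⟩ := hwxadj'.symm
    exact (e1.reachable).trans (hmid.trans e2.reachable)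
  exact no_cycle hch hxy hnadj hdisj (fun h => hAS x h hx) (fun h => hAS y h hy)
    (fun h => hBS x h hx) (fun h => hBS y h hy) hAB hrA hrB

end Aux

variable {V : Type u} {G : SimpleGraph V}

/-- lift a simplicial vertex of an induced subgraph whose neighborhood is inside -/
lemma lift_simplicial {T : Set V} {u : V} (hu : u ∈ T)
    (hclosed : ∀ w, G.Adj u w → w ∈ T)
    (hcl : (G.induce T).IsClique ((G.induce T).neighborSet ⟨u, hu⟩)) :
    G.IsClique (G.neighborSet u) := by
  intro p hp q hq hpq
  have hp' : (G.induce T).Adj ⟨u, hu⟩ ⟨p, hclosed _ hp⟩ := hp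
  have hq' : (G.induce T).Adj ⟨u, hu⟩ ⟨q, hclosed _ hq⟩ := hq
  have : (G.induce T).Adj ⟨p, hclosed _ hp⟩ ⟨q, hclosed _ hq⟩ :=
    hcl hp' hq' (fun h => hpq (congrArg Subtype.val h))
  exact this

/-- Dirac: a chordal graph that is not complete has two nonadjacent simplicial vertices. -/
theorem dirac : ∀ (n : ℕ) {V : Type u} [Fintype V] (G : SimpleGraph V),
    Fintype.card V ≤ n → IsChordal G → ∀ a b : V, a ≠ b → ¬ G.Adj a b →
    ∃ u v : V, G.IsClique (G.neighborSet u) ∧ G.IsClique (G.neighborSet v) ∧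
      u ≠ v ∧ ¬ G.Adj u v := by
  intro n
  induction n with
  | zero =>
    intro V _ G hcard _ a _ _ _
    have := Fintype.card_pos_iff.mpr ⟨a⟩
    omega
  | succ n ih =>
    intro V _ G hcard hch a b hab hnadj
    classical
    -- find a minimal separator
    have hex : ∃ m : ℕ, ∃ s : Finset V, (a ∉ s ∧ b ∉ s ∧
        ¬ ReflTransGen (auxRel G (↑s : Set V)) a b) ∧ s.card = m := by
      refine ⟨_, (Finset.univ.erase a).erase b, ⟨?_, ?_, ?_⟩, rfl⟩
      · intro h; exact (Finset.mem_erase.mp (Finset.mem_erase.mp h).2).1 rfl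
      · intro h; exact (Finset.mem_erase.mp h).1 rfl
      · intro h
        have key : ∀ v, ReflTransGen (auxRel G (↑((Finset.univ.erase a).erase b) : Set V)) a v → v = a := by
          intro v hv
          induction hv with
          | refl => rfl
          | @tail c d hc step ih2 =>
            rw [auxRel_def] at step
            obtain ⟨hadj, hc1, hd1⟩ := step
            have hceq : c = a := ih2
            have hd' : d = b ∨ d = a := by
              by_contra hcon
              push_neg at hcon
              refine hd1 (Finset.mem_coe.mpr ?_)
              rw [Finset.mem_erase, Finset.mem_erase]
              exact ⟨hcon.1, hcon.2, Finset.mem_univ d⟩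
            rw [hceq] at hadj
            rcases hd' with h' | h'
            · rw [h'] at hadj; exact absurd hadj hnadj
            · rw [h'] at hadj; exact absurd hadj (G.irrefl)
        exact hab (key b h).symm
    obtain ⟨S, ⟨haS, hbS, hsep⟩, hScard⟩ := Nat.find_spec hex
    have hmincard : ∀ s : Finset V, (a ∉ s ∧ b ∉ s ∧
        ¬ ReflTransGen (auxRel G (↑s : Set V)) a b) → Nat.find hex ≤ s.card :=
      fun s hs => Nat.find_min' hex ⟨s, hs, rfl⟩
    have hmin : ∀ x ∈ (↑S : Set V), ReflTransGen (auxRel G ((↑S : Set V) \ {x})) a b := by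
      intro x hx
      by_contra hcon
      have : Nat.find hex ≤ (S.erase x).card := by
        apply hmincard
        refine ⟨fun h => haS (Finset.mem_of_mem_erase h),
          fun h => hbS (Finset.mem_of_mem_erase h), ?_⟩
        rw [Finset.coe_erase]
        exact hcon
      have := Finset.card_erase_of_mem hx ▸ this
      have hSpos : 0 < S.card := Finset.card_pos.mpr ⟨x, hx⟩
      omega
    have hclique : ∀ x ∈ (↑S : Set V), ∀ y ∈ (↑S : Set V), x ≠ y → G.Adj x y :=
      fun x hx y hy hxy => sep_clique hch haS hbS hsep hmin hx hy hxy
    -- components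
    set A := compOut G (↑S : Set V) a with hA
    set B := compOut G (↑S : Set V) b with hB
    have hbA : b ∉ A := fun h => hsep h
    have haB : a ∉ B := fun h => hsep (compOut_comm h)
    have hdisj : ∀ v, v ∈ A → v ∈ B → False :=
      fun v hvA hvB => hsep (ReflTransGen.trans hvA (compOut_comm hvB))
    have hAS : ∀ v ∈ A, v ∉ (↑S : Set V) := fun v hv => compOut_subset haS hv
    have hBS : ∀ v ∈ B, v ∉ (↑S : Set V) := fun v hv => compOut_subset hbS hv
    -- simplicial vertex in A-side
    have side : ∀ (c : V) (hcS : c ∉ (↑S : Set V)) (hoc : c ∉ compOut G (↑S : Set V) c → False)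
        (hmiss : ∃ d : V, d ∉ compOut G (↑S : Set V) c ∪ (↑S : Set V)),
        ∃ u ∈ compOut G (↑S : Set V) c, G.IsClique (G.neighborSet u) := by
      intro c hcS _ hmiss
      set C := compOut G (↑S : Set V) c with hC
      set T : Set V := C ∪ (↑S : Set V) with hT
      obtain ⟨d, hd⟩ := hmiss
      haveI : Fintype ↥T := Fintype.ofFinite _
      have hcardT : Fintype.card ↥T < Fintype.card V := by
        have : Fintype.card ↥T ≤ Fintype.card ↥({d}ᶜ : Set V) := by
          apply Set.card_le_card
          intro z hz
          simp only [Set.mem_compl_iff, Set.mem_singleton_iff]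
          intro h
          exact hd (h ▸ hz)
        have h2 : Fintype.card ↥({d}ᶜ : Set V) < Fintype.card V := by
          have h1 : Fintype.card ↥({d} : Set V) = 1 := by simp
          rw [Fintype.card_compl_set, h1]
          have : 0 < Fintype.card V := Fintype.card_pos_iff.mpr ⟨d⟩
          omega
        omega
      have hclosed : ∀ u ∈ C, ∀ w, G.Adj u w → w ∈ T := by
        intro u hu w hadj
        by_cases hwS : w ∈ (↑S : Set V)
        · exact Or.inr hwS
        · exact Or.inl (compOut_adj hu hcS hadj hwS)
      have hlift : ∀ (uu : ↥T), (uu : V) ∈ C →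
          (G.induce T).IsClique ((G.induce T).neighborSet uu) →
          G.IsClique (G.neighborSet (uu : V)) := by
        intro uu huu hcl
        have : uu = ⟨(uu : V), Or.inl huu⟩ := Subtype.ext rfl
        rw [this] at hcl
        exact lift_simplicial (Or.inl huu) (hclosed _ huu) hcl
      by_cases hcom : ∀ (z w : ↥T), z ≠ w → (G.induce T).Adj z w
      · refine ⟨c, compOut_self c, ?_⟩
        apply hlift ⟨c, Or.inl (compOut_self c)⟩ (compOut_self c)
        intro z hz w hw hzw
        exact hcom z w hzw
      · push_neg at hcom
        obtain ⟨z, w, hzw, hznadj⟩ := hcom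
        obtain ⟨u', v', hu's, hv's, hu'v', hnadj'⟩ :=
          ih (G.induce T) (by omega) (induce_chordal hch T) z w hzw hznadj
        have : (u' : V) ∈ C ∨ (v' : V) ∈ C := by
          by_contra hcon
          push_neg at hcon
          have hu'S : (u' : V) ∈ (↑S : Set V) := u'.2.resolve_left hcon.1
          have hv'S : (v' : V) ∈ (↑S : Set V) := v'.2.resolve_left hcon.2
          have : G.Adj (u' : V) (v' : V) :=
            hclique _ hu'S _ hv'S (fun h => hu'v' (Subtype.ext h))
          exact hnadj' this
        rcases this with h | h
        · exact ⟨u', h, hlift u' h hu's⟩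
        · exact ⟨v', h, hlift v' h hv's⟩
    obtain ⟨u, huA, husimp⟩ := side a haS (fun h => h (compOut_self a))
      ⟨b, fun h => h.elim (fun h' => hbA h') (fun h' => hbS h')⟩
    obtain ⟨v, hvB, hvsimp⟩ := side b hbS (fun h => h (compOut_self b))
      ⟨a, fun h => h.elim (fun h' => haB h') (fun h' => haS h')⟩
    refine ⟨u, v, husimp, hvsimp, ?_, ?_⟩
    · intro h; exact hdisj u huA (h ▸ hvB)
    · intro hadj
      exact hdisj v (compOut_adj huA haS hadj (hBS v hvB)) hvB


/-- If an undirected chordal graph `D` has a maximal clique `K` that is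
not all of `V(D)`, then there is a simplicial vertex outside `K`: a vertex `v ∉ K` whose
neighborhood in `D` is a clique. -/
theorem stmt_5 {V : Type*} [Fintype V] (D : SimpleGraph V) (hch : IsChordal D)
    (K : Set V) (hK : D.IsClique K)
    (hmax : ∀ K' : Set V, D.IsClique K' → K ⊆ K' → K' = K)
    (hne : K ≠ Set.univ) :
    ∃ v : V, v ∉ K ∧ D.IsClique (D.neighborSet v) := by
  classical
  by_cases hcom : ∀ u v : V, u ≠ v → D.Adj u v
  · obtain ⟨v, hv⟩ : ∃ v, v ∉ K := by
      by_contra h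
      push_neg at h
      exact hne (Set.eq_univ_iff_forall.mpr h)
    refine ⟨v, hv, ?_⟩
    intro p _ q _ hpq
    exact hcom p q hpq
  · push_neg at hcom
    obtain ⟨a, b, hab, hnadj⟩ := hcom
    obtain ⟨u, v, hus, hvs, huv, hnadj'⟩ := dirac (Fintype.card V) D le_rfl hch a b hab hnadj
    by_cases huK : u ∈ K
    · refine ⟨v, ?_, hvs⟩
      intro hvK
      exact hnadj' (hK huK hvK huv)
    · exact ⟨u, huK, hus⟩
end

section
/- Let C be an undirected connected graph, K a maximal clique of C, and T the vertex set of any connected component of C ∖ K. Then there exists a vertex i ∈ K that has no neighbor in T, provided C is chordal. -/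
private lemma chain_of_rtg {V : Type*} {R : V → V → Prop} {x y : V}
    (h : Relation.ReflTransGen R x y) :
    ∃ (r : ℕ) (q : ℕ → V), q 0 = x ∧ q r = y ∧ ∀ i, i < r → R (q i) (q (i + 1)) := by
  induction h with
  | refl => exact ⟨0, fun _ => x, rfl, rfl, fun i hi => absurd hi (Nat.not_lt_zero i)⟩
  | @tail b c hxb hbc ih =>
    obtain ⟨r, q, h0, hr, hc⟩ := ih
    refine ⟨r + 1, fun i => if i ≤ r then q i else c, ?_, ?_, ?_⟩
    · show (if 0 ≤ r then q 0 else c) = x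
      rw [if_pos (Nat.zero_le r)]; exact h0
    · show (if r + 1 ≤ r then q (r + 1) else c) = c
      rw [if_neg (by omega)]
    · intro i hi
      show R (if i ≤ r then q i else c) (if i + 1 ≤ r then q (i + 1) else c)
      rcases Nat.lt_or_ge i r with h | h
      · rw [if_pos (by omega), if_pos (by omega)]
        exact hc i h
      · have hir : i = r := by omega
        subst hir
        rw [if_pos le_rfl, if_neg (by omega), hr]
        exact hbc

private lemma no_chordless_cycle {V : Type*} {C : SimpleGraph V} (hch : IsChordal C)
    (n : ℕ) (hn : 4 ≤ n) (g : ℕ → V)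
    (hinj : ∀ i j, i < j → j < n → g i ≠ g j)
    (hadj : ∀ i, i + 1 < n → C.Adj (g i) (g (i + 1)))
    (hlast : C.Adj (g (n - 1)) (g 0))
    (hchord : ∀ i j, i + 1 < j → j < n → ¬(i = 0 ∧ j = n - 1) → ¬ C.Adj (g i) (g j)) :
    False := by
  haveI : NeZero n := ⟨by omega⟩
  set f : ZMod n → V := fun z => g z.val with hf
  have hvlt : ∀ z : ZMod n, z.val < n := fun z => ZMod.val_lt z
  have hfinj : Function.Injective f := by
    intro z w hzw
    by_contra hne
    have hv : z.val ≠ w.val := fun h => hne (ZMod.val_injective n h)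
    rcases lt_or_gt_of_ne hv with h | h
    · exact hinj _ _ h (hvlt w) hzw
    · exact hinj _ _ h (hvlt z) hzw.symm
  have hone : (1 : ZMod n).val = 1 := by
    haveI : Fact (1 < n) := ⟨by omega⟩
    exact ZMod.val_one n
  have hsucc : ∀ z : ZMod n, (z + 1).val = (z.val + 1) % n := by
    intro z; rw [ZMod.val_add, hone]
  have hcyc : ∀ z : ZMod n, C.Adj (f z) (f (z + 1)) := by
    intro z
    show C.Adj (g z.val) (g (z + 1).val)
    rcases Nat.lt_or_ge (z.val + 1) n with h | h
    · have e : (z + 1).val = z.val + 1 := by rw [hsucc]; exact Nat.mod_eq_of_lt h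
      rw [e]; exact hadj z.val h
    · have hz : z.val = n - 1 := by have := hvlt z; omega
      have e : (z + 1).val = 0 := by
        rw [hsucc, hz, show n - 1 + 1 = n by omega, Nat.mod_self]
      rw [e, hz]; exact hlast
  obtain ⟨k, l, hkl, hk1, hl1, hadjkl⟩ := hch n hn f hfinj hcyc
  have key : ∀ k l : ZMod n, k ≠ l → k + 1 ≠ l → l + 1 ≠ k → C.Adj (f k) (f l) →
      k.val < l.val → False := by
    intro k l hkl hk1 hl1 hadjkl hlt
    have hj : l.val < n := hvlt l
    have hij1 : k.val + 1 ≠ l.val := by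
      intro h
      apply hk1
      apply ZMod.val_injective n
      rw [hsucc, Nat.mod_eq_of_lt (by omega), h]
    have hnotend : ¬ (k.val = 0 ∧ l.val = n - 1) := by
      rintro ⟨hi, hjn⟩
      apply hl1
      apply ZMod.val_injective n
      rw [hsucc, hjn, show n - 1 + 1 = n by omega, Nat.mod_self, hi]
    exact hchord k.val l.val (by omega) hj hnotend hadjkl
  rcases Nat.lt_trichotomy k.val l.val with h | h | h
  · exact key k l hkl hk1 hl1 hadjkl h
  · exact hkl (ZMod.val_injective n h)
  · exact key l k hkl.symm hl1 hk1 hadjkl.symm h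

/-- Let `C` be a connected chordal graph, `K` a maximal clique of `C`,
and `T` the vertex set of a connected component of `C ∖ K` (expressed by: `T` is disjoint
from `K`, nonempty, connected via edges inside `T`, and closed under adjacency outside
`K`). Then some vertex `i ∈ K` has no neighbor in `T`. -/
theorem stmt_6 {V : Type*} [Fintype V] (C : SimpleGraph V) (hconn : C.Connected)
    (hch : IsChordal C)
    (K : Set V) (hK : C.IsClique K)
    (hmax : ∀ K' : Set V, C.IsClique K' → K ⊆ K' → K' = K)
    (T : Set V) (hTK : ∀ t ∈ T, t ∉ K) (hTne : T.Nonempty)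
    (hTconn : ∀ t ∈ T, ∀ t' ∈ T,
      Relation.ReflTransGen (fun a b => C.Adj a b ∧ a ∈ T ∧ b ∈ T) t t')
    (hTclosed : ∀ t ∈ T, ∀ u : V, C.Adj t u → u ∉ K → u ∈ T) :
    ∃ i ∈ K, ∀ t ∈ T, ¬ C.Adj i t := by
  classical
  by_contra hcon
  push_neg at hcon
  set M : V → Set V := fun v => {b | b ∈ K ∧ C.Adj b v} with hM
  obtain ⟨t, ht, htmax⟩ := Set.exists_max_image T (fun v => (M v).ncard) (Set.toFinite T) hTne
  have htK : t ∉ K := hTK t ht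
  have hexa : ∃ a ∈ K, ¬ C.Adj a t := by
    by_contra h
    push_neg at h
    have hclique : C.IsClique (insert t K) := by
      rw [SimpleGraph.isClique_iff]
      intro u hu v hv huv
      rcases hu with rfl | hu
      · rcases hv with rfl | hv
        · exact absurd rfl huv
        · exact (h v hv).symm
      · rcases hv with rfl | hv
        · exact h u hu
        · exact hK hu hv huv
    have := hmax _ hclique (Set.subset_insert t K)
    exact htK (this ▸ Set.mem_insert t K)
  obtain ⟨a, ha, hat⟩ := hexa
  obtain ⟨ta, hta, hataadj⟩ := hcon a ha
  set P : ℕ → Prop := fun r => ∃ q : ℕ → V, q 0 = t ∧ (∀ i, i ≤ r → q i ∈ T) ∧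
    (∀ i, i < r → C.Adj (q i) (q (i + 1))) ∧ C.Adj a (q r) with hP
  have hPex : ∃ r, P r := by
    obtain ⟨r, q, h0, hr, hc⟩ := chain_of_rtg (hTconn t ht ta hta)
    refine ⟨r, q, h0, ?_, fun i hi => (hc i hi).1, hr ▸ hataadj⟩
    intro i hi
    rcases Nat.eq_zero_or_pos i with rfl | hpos
    · exact h0 ▸ ht
    · have := (hc (i - 1) (by omega)).2.2
      rwa [Nat.sub_add_cancel hpos] at this
  set r := Nat.find hPex with hrdef
  obtain ⟨q, hq0, hqT, hqadj, hqend⟩ := Nat.find_spec hPex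
  rw [← hrdef] at hqT hqadj hqend
  have hr1 : 1 ≤ r := by
    rcases Nat.eq_zero_or_pos r with h0 | h1
    · rw [h0] at hqend
      exact absurd (hq0 ▸ hqend) hat
    · exact h1
  have hnA : ∀ i, i < r → ¬ C.Adj a (q i) := by
    intro i hi hadj
    exact Nat.find_min hPex hi
      ⟨q, hq0, fun j hj => hqT j (by omega), fun j hj => hqadj j (by omega), hadj⟩
  have hne : ∀ i j, i < j → j ≤ r → q i ≠ q j := by
    intro i j hij hjr heq
    have hd1 : 1 ≤ j - i := by omega
    apply Nat.find_min hPex (show r - (j - i) < r by omega)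
    refine ⟨fun m => if m ≤ i then q m else q (m + (j - i)), ?_, ?_, ?_, ?_⟩
    · show (if 0 ≤ i then q 0 else _) = t
      rw [if_pos (Nat.zero_le i)]; exact hq0
    · intro m hm
      show (if m ≤ i then q m else q (m + (j - i))) ∈ T
      by_cases h : m ≤ i
      · rw [if_pos h]; exact hqT m (by omega)
      · rw [if_neg h]; exact hqT _ (by omega)
    · intro m hm
      show C.Adj (if m ≤ i then q m else q (m + (j - i)))
        (if m + 1 ≤ i then q (m + 1) else q (m + 1 + (j - i)))
      rcases Nat.lt_trichotomy m i with h | h | h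
      · rw [if_pos (by omega), if_pos (by omega)]
        exact hqadj m (by omega)
      · subst h
        rw [if_pos le_rfl, if_neg (by omega), heq,
          show m + 1 + (j - m) = j + 1 by omega]
        exact hqadj j (by omega)
      · rw [if_neg (by omega), if_neg (by omega),
          show m + 1 + (j - i) = m + (j - i) + 1 by omega]
        exact hqadj (m + (j - i)) (by omega)
    · show C.Adj a (if r - (j - i) ≤ i then q (r - (j - i)) else q (r - (j - i) + (j - i)))
      by_cases h : r - (j - i) ≤ i
      · have hiv : r - (j - i) = i := by omega
        have hjv : j = r := by omega
        rw [if_pos h, hiv, heq, hjv]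
        exact hqend
      · rw [if_neg h, show r - (j - i) + (j - i) = r by omega]
        exact hqend
  have hind : ∀ i j, i + 2 ≤ j → j ≤ r → ¬ C.Adj (q i) (q j) := by
    intro i j hij hjr hadjq
    have hd1 : 1 ≤ j - i - 1 := by omega
    apply Nat.find_min hPex (show r - (j - i - 1) < r by omega)
    refine ⟨fun m => if m ≤ i then q m else q (m + (j - i - 1)), ?_, ?_, ?_, ?_⟩
    · show (if 0 ≤ i then q 0 else _) = t
      rw [if_pos (Nat.zero_le i)]; exact hq0
    · intro m hm
      show (if m ≤ i then q m else q (m + (j - i - 1))) ∈ T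
      by_cases h : m ≤ i
      · rw [if_pos h]; exact hqT m (by omega)
      · rw [if_neg h]; exact hqT _ (by omega)
    · intro m hm
      show C.Adj (if m ≤ i then q m else q (m + (j - i - 1)))
        (if m + 1 ≤ i then q (m + 1) else q (m + 1 + (j - i - 1)))
      rcases Nat.lt_trichotomy m i with h | h | h
      · rw [if_pos (by omega), if_pos (by omega)]
        exact hqadj m (by omega)
      · subst h
        rw [if_pos le_rfl, if_neg (by omega), show m + 1 + (j - m - 1) = j by omega]
        exact hadjq
      · rw [if_neg (by omega), if_neg (by omega),
          show m + 1 + (j - i - 1) = m + (j - i - 1) + 1 by omega]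
        exact hqadj (m + (j - i - 1)) (by omega)
    · show C.Adj a (if r - (j - i - 1) ≤ i then q (r - (j - i - 1))
        else q (r - (j - i - 1) + (j - i - 1)))
      rw [if_neg (by omega), show r - (j - i - 1) + (j - i - 1) = r by omega]
      exact hqend
  -- every K-neighbor of `t` is also a neighbor of `q r`
  have hMsub : ∀ b, b ∈ K → C.Adj b t → C.Adj b (q r) := by
    intro b hbK hbt
    by_contra hbr
    have hq0b : C.Adj b (q 0) := by rw [hq0]; exact hbt
    set k := Nat.findGreatest (fun i => C.Adj b (q i)) r with hkdef
    have hk_spec : C.Adj b (q k) :=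
      Nat.findGreatest_spec (P := fun i => C.Adj b (q i)) (Nat.zero_le r) hq0b
    have hk_le : k ≤ r := Nat.findGreatest_le (P := fun i => C.Adj b (q i)) r
    have hk_gr : ∀ m, k < m → m ≤ r → ¬ C.Adj b (q m) := fun m h1 h2 =>
      Nat.findGreatest_is_greatest (P := fun i => C.Adj b (q i)) h1 h2
    have hk_lt : k < r := by
      rcases Nat.lt_or_ge k r with h | h
      · exact h
      · have : k = r := by omega
        rw [this] at hk_spec
        exact absurd hk_spec hbr
    have hab : a ≠ b := fun h => hat (h ▸ hbt)
    have hAdjab : C.Adj a b := hK ha hbK hab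
    have haT : a ∉ T := fun h => (hTK a h) ha
    have hbT : b ∉ T := fun h => (hTK b h) hbK
    set s := r - k with hsdef
    have hs1 : 1 ≤ s := by omega
    set g : ℕ → V := fun i => if i ≤ s then q (k + i) else if i = s + 1 then a else b
      with hgdef
    have hg1 : ∀ i, i ≤ s → g i = q (k + i) := by
      intro i h
      show (if i ≤ s then q (k + i) else _) = q (k + i)
      rw [if_pos h]
    have hg2 : g (s + 1) = a := by
      show (if s + 1 ≤ s then _ else if s + 1 = s + 1 then a else b) = a
      rw [if_neg (by omega), if_pos rfl]
    have hg3 : g (s + 2) = b := by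
      show (if s + 2 ≤ s then _ else if s + 2 = s + 1 then a else b) = b
      rw [if_neg (by omega), if_neg (by omega)]
    refine no_chordless_cycle hch (s + 3) (by omega) g ?_ ?_ ?_ ?_
    · -- injectivity
      intro i j hij hj heq
      rcases (show j ≤ s ∨ j = s + 1 ∨ j = s + 2 by omega) with h | h | h
      · rw [hg1 i (by omega), hg1 j h] at heq
        exact hne (k + i) (k + j) (by omega) (by omega) heq
      · subst h
        rw [hg1 i (by omega), hg2] at heq
        exact haT (heq ▸ hqT (k + i) (by omega))
      · subst h
        rcases (show i ≤ s ∨ i = s + 1 by omega) with h' | h'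
        · rw [hg1 i h', hg3] at heq
          exact hbT (heq ▸ hqT (k + i) (by omega))
        · rw [h', hg2, hg3] at heq
          exact hab heq
    · -- consecutive edges
      intro i hi
      rcases (show i < s ∨ i = s ∨ i = s + 1 by omega) with h | h | h
      · rw [hg1 i (by omega), hg1 (i + 1) (by omega), show k + (i + 1) = k + i + 1 by omega]
        exact hqadj (k + i) (by omega)
      · subst h
        rw [hg1 s le_rfl, hg2, show k + s = r by omega]
        exact hqend.symm
      · subst h
        rw [hg2, show s + 1 + 1 = s + 2 by omega, hg3]
        exact hAdjab
    · -- closing edge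
      rw [show s + 3 - 1 = s + 2 by omega, hg3, hg1 0 (by omega), show k + 0 = k by omega]
      exact hk_spec
    · -- no chords
      intro i j hij hj hnotend hadjc
      rcases (show j ≤ s ∨ j = s + 1 ∨ j = s + 2 by omega) with h | h | h
      · rw [hg1 i (by omega), hg1 j h] at hadjc
        exact hind (k + i) (k + j) (by omega) (by omega) hadjc
      · subst h
        rw [hg1 i (by omega), hg2] at hadjc
        exact hnA (k + i) (by omega) hadjc.symm
      · subst h
        have hi0 : i ≠ 0 := fun h0 => hnotend ⟨h0, by omega⟩
        have his : i ≤ s := by omega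
        rw [hg1 i his, hg3] at hadjc
        exact hk_gr (k + i) (by omega) (by omega) hadjc.symm
  -- conclude: `q r` beats the maximality of `t`
  have hsub : M t ⊂ M (q r) := by
    constructor
    · rintro b ⟨hbK, hbt⟩
      exact ⟨hbK, hMsub b hbK hbt⟩
    · intro hsup
      exact hat (hsup ⟨ha, hqend⟩).2
  have hlt := Set.ncard_lt_ncard hsub (Set.toFinite _)
  have := htmax (q r) (hqT r le_rfl)
  omega
end

section
/- For an undirected graph C with vertex set V, fix i ∈ V and define ĝ_{i,j}(A) = m_{i,j}(V ∖ A) / m_{i,j}(V) when i and j are connected or equal in C, and 0 otherwise, where m_{i,j}(W) counts simple paths between i and j in the subgraph induced by W (with m_{i,i}(W)=1 if i∈W, and 0 if i∉W or j∉W). Then A ↦ ĝ_{i,j}(A) is monotone decreasing and supermodular as a set function on subsets of V. -/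
open scoped Classical

/-- `l` is (the vertex list of) a simple path from `i` to `j` in the subgraph of `C`
induced on `W`: no repeated vertices, first vertex `i`, last vertex `j`, all vertices in
`W`, consecutive vertices adjacent.  (For `i = j` the single list `[i]` qualifies.) -/
def IsSimplePath {V : Type*} (C : SimpleGraph V) (W : Set V) (i j : V)
    (l : List V) : Prop :=
  l.Nodup ∧ l.head? = some i ∧ l.getLast? = some j ∧ (∀ v ∈ l, v ∈ W) ∧
    l.Chain' C.Adj

/-- `m C W i j`: the number of simple paths between `i` and `j` in the subgraph of `C`
induced on `W` (equals `1` if `i = j ∈ W`, and `0` if `i ∉ W` or `j ∉ W`). -/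
noncomputable def numPaths {V : Type*} (C : SimpleGraph V) (W : Set V) (i j : V) : ℕ :=
  Set.ncard {l : List V | IsSimplePath C W i j l}

/-- `ghat C i j A = m_{i,j}(V ∖ A) / m_{i,j}(V)` when `i` and `j` are connected or equal
in `C`, and `0` otherwise. -/
noncomputable def ghat {V : Type*} (C : SimpleGraph V) (i j : V) (A : Set V) : ℝ :=
  if C.Reachable i j then
    (numPaths C (Set.univ \ A) i j : ℝ) / (numPaths C Set.univ i j : ℝ)
  else 0

lemma paths_finite {V : Type*} [Fintype V] (C : SimpleGraph V) (W : Set V) (i j : V) :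
    {l : List V | IsSimplePath C W i j l}.Finite := by
  apply (List.finite_length_le V (Fintype.card V)).subset
  intro l hl
  exact hl.1.length_le_card

lemma paths_mono {V : Type*} (C : SimpleGraph V) {W1 W2 : Set V} (h : W1 ⊆ W2) (i j : V) :
    {l : List V | IsSimplePath C W1 i j l} ⊆ {l : List V | IsSimplePath C W2 i j l} := by
  rintro l ⟨h1, h2, h3, h4, h5⟩
  exact ⟨h1, h2, h3, fun v hv => h (h4 v hv), h5⟩

lemma numPaths_mono {V : Type*} [Fintype V] (C : SimpleGraph V) {W1 W2 : Set V}
    (h : W1 ⊆ W2) (i j : V) : numPaths C W1 i j ≤ numPaths C W2 i j :=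
  Set.ncard_le_ncard (paths_mono C h i j) (paths_finite C W2 i j)

lemma paths_diff {V : Type*} (C : SimpleGraph V) (W : Set V) (x : V) (i j : V) :
    {l : List V | IsSimplePath C W i j l} \ {l : List V | IsSimplePath C (W \ {x}) i j l}
      = {l : List V | IsSimplePath C W i j l ∧ x ∈ l} := by
  ext l
  simp only [Set.mem_diff, Set.mem_setOf_eq]
  constructor
  · rintro ⟨hl, hnl⟩
    refine ⟨hl, ?_⟩
    by_contra hx
    exact hnl ⟨hl.1, hl.2.1, hl.2.2.1,
      fun v hv => ⟨hl.2.2.2.1 v hv, fun hvx => hx (hvx ▸ hv)⟩, hl.2.2.2.2⟩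
  · rintro ⟨hl, hx⟩
    exact ⟨hl, fun hnl => (hnl.2.2.2.1 x hx).2 rfl⟩

lemma numPaths_split {V : Type*} [Fintype V] (C : SimpleGraph V) (W : Set V) (x : V) (i j : V) :
    numPaths C W i j
      = {l : List V | IsSimplePath C W i j l ∧ x ∈ l}.ncard + numPaths C (W \ {x}) i j := by
  rw [numPaths, numPaths, ← paths_diff C W x i j]
  exact (Set.ncard_diff_add_ncard_of_subset
    (paths_mono C Set.diff_subset i j) (paths_finite C W i j)).symm

/-- For any graph `C` and vertices `i, j`, the set function
`A ↦ ĝ_{i,j}(A)` is monotone decreasing and supermodular. -/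
theorem stmt_8 {V : Type*} [Fintype V] (C : SimpleGraph V) (i j : V) :
    (∀ A B : Set V, A ⊆ B → ghat C i j B ≤ ghat C i j A) ∧
    (∀ A B : Set V, A ⊆ B → ∀ x : V, x ∉ B →
      ghat C i j (A ∪ {x}) - ghat C i j A ≤ ghat C i j (B ∪ {x}) - ghat C i j B) := by
  constructor
  · intro A B hAB
    unfold ghat
    split
    · rcases eq_or_ne (numPaths C Set.univ i j) 0 with h0 | h0
      · simp [h0]
      · have hd : (0:ℝ) < (numPaths C Set.univ i j : ℝ) :=
          Nat.cast_pos.mpr (Nat.pos_of_ne_zero h0)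
        rw [div_le_div_iff_of_pos_right hd, Nat.cast_le]
        exact numPaths_mono C (Set.diff_subset_diff_right hAB) i j
    · exact le_refl 0
  · intro A B hAB x _
    unfold ghat
    split
    · rcases eq_or_ne (numPaths C Set.univ i j) 0 with h0 | h0
      · simp [h0]
      · have hd : (0:ℝ) < (numPaths C Set.univ i j : ℝ) :=
          Nat.cast_pos.mpr (Nat.pos_of_ne_zero h0)
        rw [div_sub_div_same, div_sub_div_same, div_le_div_iff_of_pos_right hd, sub_le_sub_iff]
        rw [show Set.univ \ (A ∪ {x}) = (Set.univ \ A) \ {x} from (Set.diff_diff).symm,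
          show Set.univ \ (B ∪ {x}) = (Set.univ \ B) \ {x} from (Set.diff_diff).symm]
        have hsub : Set.univ \ B ⊆ Set.univ \ A := Set.diff_subset_diff_right hAB
        have hA := numPaths_split C (Set.univ \ A) x i j
        have hB := numPaths_split C (Set.univ \ B) x i j
        have ht : {l : List V | IsSimplePath C (Set.univ \ B) i j l ∧ x ∈ l}.ncard
            ≤ {l : List V | IsSimplePath C (Set.univ \ A) i j l ∧ x ∈ l}.ncard := by
          apply Set.ncard_le_ncard
          · rintro l ⟨hl, hx⟩
            exact ⟨paths_mono C hsub i j hl, hx⟩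
          · exact (paths_finite C (Set.univ \ A) i j).subset (fun l hl => hl.1)
        exact_mod_cast by omega
    · simp
end

section
/- In a DAG G with topological order 1, 2, …, p, define interventions iteratively: given shift intervention I_{k} on targets i₁ < … < i_k, if there exists a node whose mean under P^{I_k} differs from the target mean q, let i_{k+1} be the smallest such node; then i_{k+1} > i_k, and the process terminates after at most p steps with a shift intervention matching all coordinate means exactly. -/
open MeasureTheory

/-- In a structural causal model on a DAG with topological order
`1 < 2 < … < p` (parents precede children), consider the iterative construction of the
matching shift intervention.  First conjunct (the inductive step): if the current shift
intervention `a` has all its targets below `i` (`a j = 0` for `j ≥ i`), already matches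
the target means `q j` for all `j < i`, and fails to match at `i`, then modifying only
the shift value at the new target `i` (which is strictly above all previous targets)
yields an intervention matching all means up to and including `i`.  Second conjunct:
the process terminates with a shift intervention matching all coordinate means exactly.
-/
theorem stmt_13 {p : ℕ} {Ω : Type*} [MeasurableSpace Ω] (μ : Measure Ω)
    [IsProbabilityMeasure μ]
    (par : Fin p → Fin p → Prop) (hpar : ∀ j i : Fin p, par j i → j < i)
    (F : Fin p → (Fin p → ℝ) → Ω → ℝ)
    (hdep : ∀ (i : Fin p) (x y : Fin p → ℝ) (ω : Ω),
      (∀ j, par j i → x j = y j) → F i x ω = F i y ω)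
    (sol : (Fin p → ℝ) → Fin p → Ω → ℝ)
    (hsol : ∀ (a : Fin p → ℝ) (i : Fin p) (ω : Ω),
      sol a i ω = F i (fun j => sol a j ω) ω + a i)
    (hint : ∀ (a : Fin p → ℝ) (i : Fin p), Integrable (sol a i) μ)
    (q : Fin p → ℝ) :
    (∀ (a : Fin p → ℝ) (i : Fin p),
        (∀ j : Fin p, j < i → (∫ ω, sol a j ω ∂μ) = q j) →
        (∀ j : Fin p, i ≤ j → a j = 0) →
        (∫ ω, sol a i ω ∂μ) ≠ q i →
        ∃ b : Fin p → ℝ, (∀ j : Fin p, j ≠ i → b j = a j) ∧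
          ∀ j : Fin p, j ≤ i → (∫ ω, sol b j ω ∂μ) = q j)
    ∧ ∃ a : Fin p → ℝ, ∀ i : Fin p, (∫ ω, sol a i ω ∂μ) = q i := by
  classical
  -- Key lemma: sol a i depends only on a j for j ≤ i
  have key : ∀ (i : Fin p) (a b : Fin p → ℝ),
      (∀ j : Fin p, j ≤ i → a j = b j) → ∀ ω, sol a i ω = sol b i ω := by
    have keyN : ∀ (n : ℕ) (i : Fin p), (i : ℕ) = n → ∀ (a b : Fin p → ℝ),
        (∀ j : Fin p, j ≤ i → a j = b j) → ∀ ω, sol a i ω = sol b i ω := by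
      intro n
      induction n using Nat.strong_induction_on with
      | _ n ihn =>
        intro i hi a b hab ω
        rw [hsol, hsol, hab i le_rfl]
        congr 1
        apply hdep
        intro j hj
        exact ihn (j : ℕ) (hi ▸ hpar j i hj) j rfl a b
          (fun k hk => hab k (le_of_lt (lt_of_le_of_lt hk (hpar j i hj)))) ω
    exact fun i => keyN i i rfl
  -- one-step update lemma
  have step : ∀ (a : Fin p → ℝ) (i : Fin p),
      ∃ b : Fin p → ℝ, (∀ j : Fin p, j ≠ i → b j = a j) ∧
        (∀ j : Fin p, j < i → ∀ ω, sol b j ω = sol a j ω) ∧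
        (∫ ω, sol b i ω ∂μ) = q i := by
    intro a i
    set c : ℝ := a i + (q i - ∫ ω, sol a i ω ∂μ) with hc
    refine ⟨Function.update a i c, fun j hj => Function.update_of_ne hj _ _, ?_, ?_⟩
    · intro j hj ω
      apply key
      intro k hk
      exact Function.update_of_ne (ne_of_lt (lt_of_le_of_lt hk hj)) _ _
    · have hpt : ∀ ω, sol (Function.update a i c) i ω
          = sol a i ω + (q i - ∫ ω, sol a i ω ∂μ) := by
        intro ω
        have h1 := hsol (Function.update a i c) i ω
        have h2 := hsol a i ω
        have hF : F i (fun j => sol (Function.update a i c) j ω) ω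
            = F i (fun j => sol a j ω) ω := by
          apply hdep
          intro j hj
          apply key
          intro k hk
          exact Function.update_of_ne (ne_of_lt (lt_of_le_of_lt hk (hpar j i hj))) _ _
        rw [h1, hF, Function.update_self, hc]
        linarith
      calc (∫ ω, sol (Function.update a i c) i ω ∂μ)
          = ∫ ω, (sol a i ω + (q i - ∫ ω, sol a i ω ∂μ)) ∂μ := by
            exact integral_congr_ae (Filter.Eventually.of_forall hpt)
        _ = q i := by
            rw [integral_add (hint a i) (integrable_const _), integral_const]
            simp
  constructor
  · intro a i h1 _ _
    obtain ⟨b, hb1, hb2, hb3⟩ := step a i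
    refine ⟨b, hb1, fun j hj => ?_⟩
    rcases lt_or_eq_of_le hj with h | h
    · calc (∫ ω, sol b j ω ∂μ) = ∫ ω, sol a j ω ∂μ :=
            integral_congr_ae (Filter.Eventually.of_forall (hb2 j h))
        _ = q j := h1 j h
    · subst h; exact hb3
  · have main : ∀ k : ℕ, ∃ a : Fin p → ℝ,
        ∀ j : Fin p, (j : ℕ) < k → (∫ ω, sol a j ω ∂μ) = q j := by
      intro k
      induction k with
      | zero => exact ⟨0, fun j hj => absurd hj (Nat.not_lt_zero _)⟩
      | succ k ih =>
        obtain ⟨a, ha⟩ := ih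
        by_cases h : k < p
        · obtain ⟨b, _, hb2, hb3⟩ := step a ⟨k, h⟩
          refine ⟨b, fun j hj => ?_⟩
          rcases Nat.lt_succ_iff_lt_or_eq.mp hj with h' | h'
          · calc (∫ ω, sol b j ω ∂μ) = ∫ ω, sol a j ω ∂μ :=
                integral_congr_ae (Filter.Eventually.of_forall (hb2 j h'))
              _ = q j := ha j h'
          · have : j = ⟨k, h⟩ := Fin.ext h'
            rw [this]; exact hb3
        · exact ⟨a, fun j hj => ha j (lt_of_lt_of_le j.isLt (Nat.le_of_not_lt h))⟩
    obtain ⟨a, ha⟩ := main p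
    exact ⟨a, fun i => ha i i.isLt⟩
end

section
/- Let C be a connected undirected graph with an acyclic orientation D that has no v-structures, and suppose a vertex j outside C has a directed edge j → k into some vertex k of C in a larger DAG that is closed under Meek rules R1 and R2. Then j → l for every vertex l of C; in particular, j is an ancestor of the unique source of D. -/
/-- Consider a partially directed graph, given by a directed-edge
relation `D` and a symmetric undirected-edge relation `U` (disjoint from `D`), which is
closed under Meek rules R1 and R2 (closure expressed as: the premise patterns cannot
leave the relevant edge undirected/absent).  Let `C` be a chain component: a set that is
connected via its internal undirected edges and closed under undirected edges.  If a
vertex `j ∉ C` has a directed edge `j → k` into some `k ∈ C`, then `j → l` for every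
`l ∈ C` (in particular `j` points into the unique source of `C`). -/
theorem stmt_14 {V : Type*} (D U : V → V → Prop)
    (hUsymm : ∀ a b : V, U a b → U b a)
    (hdisj : ∀ a b : V, ¬ (D a b ∧ U a b))
    (hacyc : ∀ a : V, ¬ Relation.TransGen D a a)
    (hR1 : ∀ a b c : V, D a b → U b c → a ≠ c → (D a c ∨ D c a ∨ U a c))
    (hR2 : ∀ a b c : V, D a b → D b c → ¬ U a c)
    (C : Set V)
    (hCconn : ∀ u ∈ C, ∀ v ∈ C,
      Relation.ReflTransGen (fun a b => U a b ∧ a ∈ C ∧ b ∈ C) u v)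
    (hCmax : ∀ u ∈ C, ∀ v : V, U u v → v ∈ C)
    (j : V) (hj : j ∉ C) (k : V) (hk : k ∈ C) (hjk : D j k) :
    ∀ l ∈ C, D j l := by
  intro l hl
  induction hCconn k hk l hl with
  | refl => exact hjk
  | tail _ hbc ih =>
    obtain ⟨hU, hbC, hcC⟩ := hbc
    have hjb := ih hbC
    have hjc : j ≠ _ := fun h => hj (h ▸ hcC)
    rcases hR1 j _ _ hjb hU hjc with h | h | h
    · exact h
    · exact absurd (hUsymm _ _ hU) (hR2 _ _ _ h hjb)
    · exact absurd (hCmax _ hcC _ (hUsymm _ _ h)) hj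
end

section
/- Let D be a DAG that is an orientation of a connected graph, let K be a maximal clique oriented so that its vertices are most upstream, and let k be the unique non-intervened vertex of K. If two distinct connected components T₁, T₂ of D ∖ K each contain a vertex with a directed edge into K ∖ {k}, and there is no edge between T₁ and T₂, then in any acyclic, v-structure-free completion at most one of T₁, T₂ can contain a vertex t with an edge t → k or an unoriented edge t — k. -/
section Aux
variable {V : Type*} {D U : V → V → Prop}

/-- If `k → j` and `j` is a proper ancestor of `x`, then `x` has no edge
`x — k` or `x → k`. -/
lemma lemM (hUsymm : ∀ a b : V, U a b → U b a)
    (hacyc : ∀ a : V, ¬ Relation.TransGen D a a)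
    (hR1 : ∀ a b c : V, D a b → U b c → a ≠ c → (D a c ∨ D c a ∨ U a c))
    (hR2 : ∀ a b c : V, D a b → D b c → ¬ U a c)
    {k j : V} (hkj : D k j) :
    ∀ x, Relation.TransGen D j x → ¬ (U x k ∨ D x k) := by
  intro x hx
  induction hx with
  | single hjx =>
    rintro (hU | hD)
    · exact hR2 k j _ hkj hjx (hUsymm _ _ hU)
    · exact hacyc k (((Relation.TransGen.single hkj).tail hjx).tail hD)
  | @tail w x' hTG hwx ih =>
    rintro (hU | hD)
    · by_cases hwk : w = k
      · exact hacyc k (Relation.TransGen.head hkj (hwk ▸ hTG))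
      · rcases hR1 w x' k hwx hU hwk with h | h | h
        · exact hacyc k ((Relation.TransGen.head hkj hTG).tail h)
        · exact hR2 k w x' h hwx (hUsymm _ _ hU)
        · exact ih (Or.inl h)
    · exact hacyc k (((Relation.TransGen.head hkj hTG).tail hwx).tail hD)

/-- Propagation: if `j` is a proper ancestor of `x` and `y ∈ T` is linked to `x`
by an undirected edge or an edge `y → x`, then `j` is a proper ancestor of `y`.
Here `s` is a vertex (of the other component) with `s → j`, nonadjacent to all of `T`. -/
lemma lemP (hUsymm : ∀ a b : V, U a b → U b a)
    (hdisj : ∀ a b : V, ¬ (D a b ∧ U a b))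
    (hR1 : ∀ a b c : V, D a b → U b c → a ≠ c → (D a c ∨ D c a ∨ U a c))
    (hnoV : ∀ a b c : V, D a b → D c b → a ≠ c → (D a c ∨ D c a ∨ U a c))
    {j s : V} {T : Set V} (hsj : D s j)
    (hnon : ∀ y ∈ T, ¬ (D s y ∨ D y s ∨ U s y))
    (hys : ∀ y ∈ T, y ≠ s) (hyj : ∀ y ∈ T, y ≠ j) :
    ∀ x, Relation.TransGen D j x → ∀ y ∈ T, (U x y ∨ D y x) →
      Relation.TransGen D j y := by
  intro x hx
  induction hx with
  | @single x' hjx =>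
    intro y hy hxy
    have hadj : D j y ∨ D y j ∨ U j y := by
      rcases hxy with hU | hD
      · exact hR1 j x' y hjx hU (hyj y hy).symm
      · rcases hnoV y x' j hD hjx (hyj y hy) with h | h | h
        · exact Or.inr (Or.inl h)
        · exact Or.inl h
        · exact Or.inr (Or.inr (hUsymm _ _ h))
    rcases hadj with h | h | h
    · exact Relation.TransGen.single h
    · rcases hnoV y j s h hsj (hys y hy) with h' | h' | h'
      · exact ((hnon y hy) (Or.inr (Or.inl h'))).elim
      · exact ((hnon y hy) (Or.inl h')).elim
      · exact ((hnon y hy) (Or.inr (Or.inr (hUsymm _ _ h')))).elim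
    · exact ((hnon y hy) (hR1 s j y hsj h (hys y hy).symm)).elim
  | @tail w x' hTG hwx ih =>
    intro y hy hxy
    rcases hxy with hU | hD
    · by_cases hwy : w = y
      · subst hwy
        exact (hdisj w x' ⟨hwx, hUsymm _ _ hU⟩).elim
      · rcases hR1 w x' y hwx hU hwy with h | h | h
        · exact hTG.tail h
        · exact ih y hy (Or.inr h)
        · exact ih y hy (Or.inl h)
    · by_cases hyw : y = w
      · subst hyw; exact hTG
      · rcases hnoV y x' w hD hwx hyw with h | h | h
        · exact ih y hy (Or.inr h)
        · exact hTG.tail h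
        · exact ih y hy (Or.inl (hUsymm _ _ h))

lemma lemSide (hUsymm : ∀ a b : V, U a b → U b a)
    (hdisj : ∀ a b : V, ¬ (D a b ∧ U a b))
    (hacyc : ∀ a : V, ¬ Relation.TransGen D a a)
    (hR1 : ∀ a b c : V, D a b → U b c → a ≠ c → (D a c ∨ D c a ∨ U a c))
    (hR2 : ∀ a b c : V, D a b → D b c → ¬ U a c)
    (hnoV : ∀ a b c : V, D a b → D c b → a ≠ c → (D a c ∨ D c a ∨ U a c))
    {k jA jB sA sB tB : V} {TB : Set V}
    (hDkjA : D k jA)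
    (hsB : sB ∈ TB) (htB : tB ∈ TB)
    (hnon : ∀ y ∈ TB, ¬ (D sA y ∨ D y sA ∨ U sA y))
    (hysA : ∀ y ∈ TB, y ≠ sA) (hyjA : ∀ y ∈ TB, y ≠ jA)
    (hconn : Relation.ReflTransGen
      (fun a b => (D a b ∨ D b a ∨ U a b) ∧ a ∈ TB ∧ b ∈ TB) sB tB)
    (hsAjA : D sA jA) (hsBjB : D sB jB) (hjAB : D jA jB)
    (htBk : U tB k) : False := by
  have hjAsB : D jA sB := by
    rcases hnoV jA jB sB hjAB hsBjB (hyjA sB hsB).symm with h | h | h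
    · exact h
    · rcases hnoV sB jA sA h hsAjA (hysA sB hsB) with h' | h' | h'
      · exact ((hnon sB hsB) (Or.inr (Or.inl h'))).elim
      · exact ((hnon sB hsB) (Or.inl h')).elim
      · exact ((hnon sB hsB) (Or.inr (Or.inr (hUsymm _ _ h')))).elim
    · exact ((hnon sB hsB) (hR1 sA jA sB hsAjA h (hysA sB hsB).symm)).elim
  have key : ∀ x, Relation.ReflTransGen
      (fun a b => (D a b ∨ D b a ∨ U a b) ∧ a ∈ TB ∧ b ∈ TB) x tB →
      Relation.TransGen D jA x → Relation.TransGen D jA tB := by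
    intro x hpath
    induction hpath using Relation.ReflTransGen.head_induction_on with
    | refl => exact id
    | head h' hp ih =>
      intro hTG
      obtain ⟨hadj, hxS, hcS⟩ := h'
      rcases hadj with h | h | h
      · exact ih (hTG.tail h)
      · exact ih (lemP hUsymm hdisj hR1 hnoV hsAjA hnon hysA hyjA _ hTG _ hcS (Or.inr h))
      · exact ih (lemP hUsymm hdisj hR1 hnoV hsAjA hnon hysA hyjA _ hTG _ hcS (Or.inl h))
  exact lemM hUsymm hacyc hR1 hR2 hDkjA tB
    (key sB hconn (Relation.TransGen.single hjAsB)) (Or.inl htBk)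

end Aux


/-- Consider a (shift-)interventional essential graph: a partially
directed acyclic graph with directed edges `D` and undirected edges `U` (symmetric,
disjoint from `D`), closed under Meek rules R1 and R2, and with no v-structure among
directed edges.  Let `K` be a maximal clique whose vertices are most upstream, and
`k ∈ K` the unique non-intervened vertex of `K`, which is the source of `K`
(`k → j` for all other `j ∈ K`).  Let `T₁, T₂` be (vertex sets of) two distinct
connected components of the graph induced on `V ∖ K` with no edge between them, each
containing a vertex with a directed edge into `K ∖ {k}`.  Then at most one of `T₁, T₂`
contains a vertex `t` with a directed edge `t → k` or an unoriented edge `t — k`. -/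
theorem stmt_15 {V : Type*} (D U : V → V → Prop)
    (hUsymm : ∀ a b : V, U a b → U b a)
    (hdisj : ∀ a b : V, ¬ (D a b ∧ U a b))
    (hacyc : ∀ a : V, ¬ Relation.TransGen D a a)
    (hR1 : ∀ a b c : V, D a b → U b c → a ≠ c → (D a c ∨ D c a ∨ U a c))
    (hR2 : ∀ a b c : V, D a b → D b c → ¬ U a c)
    (hnoV : ∀ a b c : V, D a b → D c b → a ≠ c → (D a c ∨ D c a ∨ U a c))
    (K : Set V)
    (hKclique : ∀ u ∈ K, ∀ v ∈ K, u ≠ v → (D u v ∨ D v u ∨ U u v))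
    (hKmax : ∀ v : V, v ∉ K → ∃ u ∈ K, ¬ (D u v ∨ D v u ∨ U u v))
    (k : V) (hk : k ∈ K)
    (hksrc : ∀ j ∈ K, j ≠ k → D k j)
    (T₁ T₂ : Set V)
    (hT₁K : ∀ t ∈ T₁, t ∉ K) (hT₂K : ∀ t ∈ T₂, t ∉ K)
    (hTdisj : ∀ t : V, ¬ (t ∈ T₁ ∧ t ∈ T₂))
    (hsep : ∀ t ∈ T₁, ∀ s ∈ T₂, ¬ (D t s ∨ D s t ∨ U t s))
    (hT₁conn : ∀ t ∈ T₁, ∀ t' ∈ T₁, Relation.ReflTransGen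
      (fun a b => (D a b ∨ D b a ∨ U a b) ∧ a ∈ T₁ ∧ b ∈ T₁) t t')
    (hT₂conn : ∀ t ∈ T₂, ∀ t' ∈ T₂, Relation.ReflTransGen
      (fun a b => (D a b ∨ D b a ∨ U a b) ∧ a ∈ T₂ ∧ b ∈ T₂) t t')
    (hT₁closed : ∀ t ∈ T₁, ∀ u : V, (D t u ∨ D u t ∨ U t u) → u ∉ K → u ∈ T₁)
    (hT₂closed : ∀ t ∈ T₂, ∀ u : V, (D t u ∨ D u t ∨ U t u) → u ∉ K → u ∈ T₂)
    (ht₁ : ∃ t ∈ T₁, ∃ j ∈ K, j ≠ k ∧ D t j)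
    (ht₂ : ∃ t ∈ T₂, ∃ j ∈ K, j ≠ k ∧ D t j) :
    ¬ ((∃ t ∈ T₁, D t k ∨ U t k) ∧ (∃ t ∈ T₂, D t k ∨ U t k)) := by
  rintro ⟨⟨t₁, ht₁T, ht₁k⟩, ⟨t₂, ht₂T, ht₂k⟩⟩
  obtain ⟨s₁, hs₁T, j₁, hj₁K, hj₁ne, hs₁j₁⟩ := ht₁
  obtain ⟨s₂, hs₂T, j₂, hj₂K, hj₂ne, hs₂j₂⟩ := ht₂
  have ht₁t₂ : t₁ ≠ t₂ := fun h => hTdisj t₁ ⟨ht₁T, h ▸ ht₂T⟩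
  have hs₁s₂ : s₁ ≠ s₂ := fun h => hTdisj s₁ ⟨hs₁T, h ▸ hs₂T⟩
  have hkj₁ : D k j₁ := hksrc j₁ hj₁K hj₁ne
  have hkj₂ : D k j₂ := hksrc j₂ hj₂K hj₂ne
  -- Step 1: both edges to `k` must be undirected.
  have ht₁U : U t₁ k := by
    rcases ht₁k with h | h
    · rcases ht₂k with h' | h'
      · exact (hsep t₁ ht₁T t₂ ht₂T (hnoV t₁ k t₂ h h' ht₁t₂)).elim
      · exact (hsep t₁ ht₁T t₂ ht₂T (hR1 t₁ k t₂ h (hUsymm _ _ h') ht₁t₂)).elim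
    · exact h
  have ht₂U : U t₂ k := by
    rcases ht₂k with h | h
    · rcases hR1 t₂ k t₁ h (hUsymm _ _ ht₁U) ht₁t₂.symm with h' | h' | h'
      · exact (hsep t₁ ht₁T t₂ ht₂T (Or.inr (Or.inl h'))).elim
      · exact (hsep t₁ ht₁T t₂ ht₂T (Or.inl h')).elim
      · exact (hsep t₁ ht₁T t₂ ht₂T (Or.inr (Or.inr (hUsymm _ _ h')))).elim
    · exact h
  have hnon12 : ∀ y ∈ T₂, ¬ (D s₁ y ∨ D y s₁ ∨ U s₁ y) := fun y hy => hsep s₁ hs₁T y hy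
  have hnon21 : ∀ y ∈ T₁, ¬ (D s₂ y ∨ D y s₂ ∨ U s₂ y) := by
    intro y hy
    rintro (h | h | h)
    · exact hsep y hy s₂ hs₂T (Or.inr (Or.inl h))
    · exact hsep y hy s₂ hs₂T (Or.inl h)
    · exact hsep y hy s₂ hs₂T (Or.inr (Or.inr (hUsymm _ _ h)))
  -- Step 2: case analysis on the relation between j₁ and j₂.
  by_cases hj : j₁ = j₂
  · subst hj
    exact hnon12 s₂ hs₂T (hnoV s₁ j₁ s₂ hs₁j₁ hs₂j₂ hs₁s₂)
  · rcases hKclique j₁ hj₁K j₂ hj₂K hj with h | h | h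
    · exact lemSide hUsymm hdisj hacyc hR1 hR2 hnoV hkj₁ hs₂T ht₂T hnon12
        (fun y hy he => hTdisj s₁ ⟨hs₁T, he ▸ hy⟩)
        (fun y hy he => hT₂K y hy (by rw [← he] at hj₁K; exact hj₁K))
        (hT₂conn s₂ hs₂T t₂ ht₂T) hs₁j₁ hs₂j₂ h ht₂U
    · exact lemSide hUsymm hdisj hacyc hR1 hR2 hnoV hkj₂ hs₁T ht₁T hnon21
        (fun y hy he => hTdisj s₂ ⟨he ▸ hy, hs₂T⟩)
        (fun y hy he => hT₁K y hy (by rw [← he] at hj₂K; exact hj₂K))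
        (hT₁conn s₁ hs₁T t₁ ht₁T) hs₂j₂ hs₁j₁ h ht₁U
    · -- `j₁ — j₂` is impossible.
      have hs₁j₂ : s₁ ≠ j₂ := fun he => hT₁K s₁ hs₁T (he ▸ hj₂K)
      rcases hR1 s₁ j₁ j₂ hs₁j₁ h hs₁j₂ with h' | h' | h'
      · exact hnon12 s₂ hs₂T (hnoV s₁ j₂ s₂ h' hs₂j₂ hs₁s₂)
      · exact hR2 j₂ s₁ j₁ h' hs₁j₁ (hUsymm _ _ h)
      · rcases hR1 s₂ j₂ s₁ hs₂j₂ (hUsymm _ _ h') hs₁s₂.symm with h'' | h'' | h''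
        · exact hnon12 s₂ hs₂T (Or.inr (Or.inl h''))
        · exact hnon12 s₂ hs₂T (Or.inl h'')
        · exact hnon12 s₂ hs₂T (Or.inr (Or.inr (hUsymm _ _ h'')))
end

section
/- Under the mean interventional faithfulness assumption, every undirected edge i — j of the essential graph of G with j ∈ T and i ∉ T must be oriented as i → j in G, where T = { i : E_P(Xᵢ) ≠ E_Q(Xᵢ) }; conversely, if faithfulness fails then some edge j → i with j ∈ T, i ∉ T exists in G. -/
open MeasureTheory

/-- In a structural causal model on a DAG `G` (parent relation `par`,
acyclic), let `P` be the observational distribution (solution `sol 0`) and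
`Q = P^{I*}` the distribution of the matching shift intervention (solution `sol a`,
with `a i ≠ 0` iff `i` is a perturbation target).  Let
`T = { i : E_P(Xᵢ) ≠ E_Q(Xᵢ) }`.  Mean interventional faithfulness states: every `i`
with `E_P(Xᵢ) = E_Q(Xᵢ)` is neither a target (`a i = 0`) nor downstream of a target.
First conjunct: under faithfulness, no edge `j → i` of `G` has `j ∈ T` and `i ∉ T`
(i.e. every edge between `T` and its complement points into `T`).  Second conjunct:
if faithfulness fails, then some edge `j → i` with `j ∈ T` and `i ∉ T` exists. -/
theorem stmt_16 {p : ℕ} {Ω : Type*} [MeasurableSpace Ω] (μ : Measure Ω)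
    [IsProbabilityMeasure μ]
    (par : Fin p → Fin p → Prop) (hacyc : WellFounded par)
    (F : Fin p → (Fin p → ℝ) → Ω → ℝ)
    (hdep : ∀ (i : Fin p) (x y : Fin p → ℝ) (ω : Ω),
      (∀ j, par j i → x j = y j) → F i x ω = F i y ω)
    (sol : (Fin p → ℝ) → Fin p → Ω → ℝ)
    (hsol : ∀ (a : Fin p → ℝ) (i : Fin p) (ω : Ω),
      sol a i ω = F i (fun j => sol a j ω) ω + a i)
    (hint : ∀ (a : Fin p → ℝ) (i : Fin p), Integrable (sol a i) μ)
    (a : Fin p → ℝ) :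
    ((∀ i : Fin p, (∫ ω, sol (fun _ => 0) i ω ∂μ) = (∫ ω, sol a i ω ∂μ) →
        a i = 0 ∧ ∀ j : Fin p, Relation.TransGen par j i → a j = 0) →
      ∀ j i : Fin p, par j i →
        (∫ ω, sol (fun _ => 0) j ω ∂μ) ≠ (∫ ω, sol a j ω ∂μ) →
        (∫ ω, sol (fun _ => 0) i ω ∂μ) = (∫ ω, sol a i ω ∂μ) → False)
    ∧ ((¬ ∀ i : Fin p, (∫ ω, sol (fun _ => 0) i ω ∂μ) = (∫ ω, sol a i ω ∂μ) →
        a i = 0 ∧ ∀ j : Fin p, Relation.TransGen par j i → a j = 0) →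
      ∃ j i : Fin p, par j i ∧
        (∫ ω, sol (fun _ => 0) j ω ∂μ) ≠ (∫ ω, sol a j ω ∂μ) ∧
        (∫ ω, sol (fun _ => 0) i ω ∂μ) = (∫ ω, sol a i ω ∂μ)) := by
  -- Key lemma: if `a` vanishes at `i` and all ancestors of `i`, then
  -- `sol a i = sol 0 i` pointwise.
  have key : ∀ i : Fin p,
      (a i = 0 ∧ ∀ j : Fin p, Relation.TransGen par j i → a j = 0) →
      ∀ ω : Ω, sol a i ω = sol (fun _ => 0) i ω := by
    intro i
    induction i using hacyc.induction with
    | _ i ih =>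
      rintro ⟨hai, hanc⟩ ω
      rw [hsol a i ω, hsol (fun _ => 0) i ω, hai]
      have : F i (fun j => sol a j ω) ω = F i (fun j => sol (fun _ => 0) j ω) ω := by
        apply hdep
        intro j hj
        exact ih j hj ⟨hanc j (Relation.TransGen.single hj),
          fun k hk => hanc k (hk.tail hj)⟩ ω
      rw [this]
  constructor
  · intro hfaith j i hpar hj hi
    obtain ⟨hai, hanc⟩ := hfaith i hi
    have hj0 : ∀ ω, sol a j ω = sol (fun _ => 0) j ω :=
      key j ⟨hanc j (Relation.TransGen.single hpar),
        fun k hk => hanc k (hk.tail hpar)⟩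
    exact hj (by exact (integral_congr_ae (Filter.Eventually.of_forall
      fun ω => (hj0 ω).symm)).symm ▸ rfl)
  · intro hnf
    -- Violating set
    set V : Fin p → Prop := fun i =>
      (∫ ω, sol (fun _ => 0) i ω ∂μ) = (∫ ω, sol a i ω ∂μ) ∧
      ¬ (a i = 0 ∧ ∀ j : Fin p, Relation.TransGen par j i → a j = 0) with hV
    obtain ⟨i₀, hi₀⟩ := not_forall.mp hnf
    rw [Classical.not_imp] at hi₀
    have hVne : ∃ i, V i := ⟨i₀, hi₀.1, hi₀.2⟩
    have hwf := hacyc.transGen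
    obtain ⟨m, hm, hmin⟩ := hwf.has_min {i | V i} (by
      obtain ⟨i, hi⟩ := hVne; exact ⟨i, hi⟩)
    -- `m` violates faithfulness; every strict ancestor of `m` does not.
    obtain ⟨hmeq, hmbad⟩ := hm
    -- Suppose no parent of m is in T; derive contradiction.
    by_contra hno
    push_neg at hno
    -- Every parent j of m has equal means, hence (by minimality) satisfies
    -- faithfulness, hence sol a j = sol 0 j pointwise.
    have hfpar : ∀ j, par j m →
        (a j = 0 ∧ ∀ k : Fin p, Relation.TransGen par k j → a k = 0) := by
      intro j hj
      have hjT : (∫ ω, sol (fun _ => 0) j ω ∂μ) = (∫ ω, sol a j ω ∂μ) := by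
        by_contra hne
        exact (hno j m hj hne) hmeq
      have hnotV : ¬ V j := fun hv => hmin j hv (Relation.TransGen.single hj)
      by_contra hc
      exact hnotV ⟨hjT, hc⟩
    have hpareq : ∀ j, par j m → ∀ ω, sol a j ω = sol (fun _ => 0) j ω :=
      fun j hj => key j (hfpar j hj)
    -- Then sol a m = sol 0 m + a m pointwise.
    have hm0 : ∀ ω, sol a m ω = sol (fun _ => 0) m ω + a m := by
      intro ω
      rw [hsol a m ω, hsol (fun _ => 0) m ω]
      have : F m (fun j => sol a j ω) ω = F m (fun j => sol (fun _ => 0) j ω) ω :=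
        hdep m _ _ ω fun j hj => hpareq j hj ω
      rw [this]; ring
    -- Integrate: E[sol a m] = E[sol 0 m] + a m, so a m = 0.
    have hiam : (∫ ω, sol a m ω ∂μ) = (∫ ω, sol (fun _ => 0) m ω ∂μ) + a m := by
      calc (∫ ω, sol a m ω ∂μ) = ∫ ω, (sol (fun _ => 0) m ω + a m) ∂μ :=
            integral_congr_ae (Filter.Eventually.of_forall hm0)
        _ = (∫ ω, sol (fun _ => 0) m ω ∂μ) + ∫ _ω, a m ∂μ :=
            integral_add (hint _ m) (integrable_const _)
        _ = (∫ ω, sol (fun _ => 0) m ω ∂μ) + a m := by simp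
    have ham : a m = 0 := by
      have := hmeq
      rw [hiam] at this
      linarith
    -- And every ancestor of m has a = 0 (via a parent which is faithful).
    have hancm : ∀ j : Fin p, Relation.TransGen par j m → a j = 0 := by
      intro j hj
      obtain ⟨b, hjb, hbm⟩ := Relation.TransGen.tail'_iff.mp hj
      rcases (Relation.reflTransGen_iff_eq_or_transGen.mp hjb) with rfl | hjb'
      · exact (hfpar b hbm).1
      · exact (hfpar b hbm).2 j hjb'
    exact hmbad ⟨ham, hancm⟩
end

section
/- If two shift interventions I₁ and I₂ on a DAG G produce the same interventional mean vector, E_{P^{I₁}}(X) = E_{P^{I₂}}(X), then I₁ = I₂ (same perturbation targets and same shift values). -/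
open MeasureTheory

/-- In a structural causal model on a DAG, if two shift interventions
(encoded as shift vectors `a, b`, with value `0` on non-targets) produce the same
interventional mean vector, then they are the same intervention: same perturbation
targets and same shift values, i.e. `a = b`. -/
theorem stmt_17 {p : ℕ} {Ω : Type*} [MeasurableSpace Ω] (μ : Measure Ω)
    [IsProbabilityMeasure μ]
    (par : Fin p → Fin p → Prop) (hacyc : WellFounded par)
    (F : Fin p → (Fin p → ℝ) → Ω → ℝ)
    (hdep : ∀ (i : Fin p) (x y : Fin p → ℝ) (ω : Ω),
      (∀ j, par j i → x j = y j) → F i x ω = F i y ω)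
    (sol : (Fin p → ℝ) → Fin p → Ω → ℝ)
    (hsol : ∀ (a : Fin p → ℝ) (i : Fin p) (ω : Ω),
      sol a i ω = F i (fun j => sol a j ω) ω + a i)
    (hint : ∀ (a : Fin p → ℝ) (i : Fin p), Integrable (sol a i) μ)
    (a b : Fin p → ℝ)
    (hmeans : ∀ i : Fin p, (∫ ω, sol a i ω ∂μ) = ∫ ω, sol b i ω ∂μ) :
    a = b := by
  have key : ∀ i : Fin p, (∀ ω, sol a i ω = sol b i ω) ∧ a i = b i := by
    intro i
    induction i using hacyc.induction with
    | _ i ih =>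
      have hF : ∀ ω, F i (fun j => sol a j ω) ω = F i (fun j => sol b j ω) ω := by
        intro ω
        exact hdep i _ _ ω (fun j hj => (ih j hj).1 ω)
      have hdiff : ∀ ω, sol a i ω = sol b i ω + (a i - b i) := by
        intro ω
        rw [hsol a i ω, hsol b i ω, hF ω]; ring
      have hab : a i = b i := by
        have h1 : (∫ ω, sol a i ω ∂μ) = (∫ ω, sol b i ω ∂μ) + (a i - b i) := by
          calc (∫ ω, sol a i ω ∂μ) = ∫ ω, (sol b i ω + (a i - b i)) ∂μ := by
                exact integral_congr_ae (Filter.Eventually.of_forall hdiff)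
            _ = (∫ ω, sol b i ω ∂μ) + (a i - b i) := by
                rw [integral_add (hint b i) (integrable_const _), integral_const,
                  probReal_univ, one_smul]
        have := hmeans i
        linarith
      refine ⟨fun ω => ?_, hab⟩
      rw [hdiff ω, hab]; ring
  funext i
  exact (key i).2
end
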